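/- arXiv:1010.1504 — 7 statements merged into one kernel-verified Lean document; each statement's English description precedes it below -/
import Mathlib

section
/- Let α > 0, σ ≥ 0 and suppose α - σ η_L > 0, α - σ η_1 > 0, α - σ η_2 > 0 and α - σ η_R > 0. Then for every λ ∈ ℝ the system of equations f(v) = w, α v - σ w = λ has exactly one solution (v, w) ∈ ℝ²; i.e. the deterministic PWL FitzHugh–Nagumo system has a unique equilibrium for every λ. -/
set_option maxHeartbeats 1600000


/-- Under the stated sign conditions, for every `λ` the deterministic
piecewise-linear FitzHugh–Nagumo system has a unique equilibrium, i.e. the system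
`f v = w`, `α v - σ w = λ` has exactly one solution `(v, w) ∈ ℝ²`. -/
theorem stmt1 (α σ ηL η1 η2 ηR v1 w1 : ℝ)
    (hv1 : 0 < v1) (hv1' : v1 < 1) (hw1 : 0 < w1) (hw1' : w1 < 1)
    (hη1 : η1 = w1 / v1) (hη2 : η2 = (1 - w1) / (1 - v1))
    (hηL : ηL < 0) (hηR : ηR < 0)
    (f : ℝ → ℝ)
    (hf : ∀ v : ℝ, f v =
      if v ≤ 0 then ηL * v
      else if v ≤ v1 then η1 * v
      else if v ≤ 1 then η2 * (v - v1) + w1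
      else ηR * (v - 1) + 1)
    (hα : 0 < α) (hσ : 0 ≤ σ)
    (hL : 0 < α - σ * ηL) (h1 : 0 < α - σ * η1)
    (h2 : 0 < α - σ * η2) (hR : 0 < α - σ * ηR) :
    ∀ lam : ℝ, ∃! p : ℝ × ℝ, f p.1 = p.2 ∧ α * p.1 - σ * p.2 = lam := by
  have hkey1 : η1 * v1 = w1 := by rw [hη1]; field_simp
  have hkey2 : η2 * (1 - v1) = 1 - w1 := by
    rw [hη2, div_mul_cancel₀]
    linarith
  have hασ : 0 < α - σ := by
    nlinarith [mul_pos h1 hv1, mul_pos h2 (by linarith : (0:ℝ) < 1 - v1)]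
  set g : ℝ → ℝ := fun v => α * v - σ * f v with hg
  have hmono : StrictMono g := by
    intro a b hab
    simp only [hg, hf]
    split_ifs <;>
      nlinarith [mul_pos h1 hv1, mul_pos h2 (by linarith : (0:ℝ) < 1 - v1),
        mul_pos hL hL, hab, hkey1, hkey2]
  have hfc : Continuous f := by
    have hfe : f = fun v => if v ≤ (0:ℝ) then ηL * v
        else if v ≤ v1 then η1 * v
        else if v ≤ 1 then η2 * (v - v1) + w1
        else ηR * (v - 1) + 1 := funext hf
    rw [hfe]
    apply Continuous.if_le
    · exact continuous_const.mul continuous_id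
    · apply Continuous.if_le
      · exact continuous_const.mul continuous_id
      · apply Continuous.if_le
        · exact (continuous_const.mul (continuous_id.sub continuous_const)).add continuous_const
        · exact (continuous_const.mul (continuous_id.sub continuous_const)).add continuous_const
        · exact continuous_id
        · exact continuous_const
        · intro x hx
          subst hx
          linarith [hkey2]
      · exact continuous_id
      · exact continuous_const
      · intro x hx
        subst hx
        rw [if_pos hv1'.le]
        linarith [hkey1]
    · exact continuous_id
    · exact continuous_const
    · intro x hx
      subst hx
      rw [if_pos hv1.le]
      ring
  have hgc : Continuous g := (continuous_const.mul continuous_id).sub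
    (continuous_const.mul hfc)
  intro lam
  obtain ⟨v, hv⟩ : ∃ v, g v = lam := by
    set a := min 0 (lam / (α - σ * ηL)) with ha
    set b := max 2 (1 + (lam - (α - σ)) / (α - σ * ηR)) with hb
    have hab : a ≤ b := le_trans (min_le_left _ _)
      (le_trans (by norm_num) (le_max_left _ _))
    have hga : g a ≤ lam := by
      have ha0 : a ≤ 0 := min_le_left _ _
      have hgae : g a = (α - σ * ηL) * a := by
        simp only [hg, hf, if_pos ha0]; ring
      rw [hgae]
      calc (α - σ * ηL) * a ≤ (α - σ * ηL) * (lam / (α - σ * ηL)) :=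
            mul_le_mul_of_nonneg_left (min_le_right _ _) hL.le
        _ = lam := by field_simp
    have hgb : lam ≤ g b := by
      have hb2 : (2:ℝ) ≤ b := le_max_left _ _
      have hbr : 1 + (lam - (α - σ)) / (α - σ * ηR) ≤ b := le_max_right _ _
      have hbr' : lam - (α - σ) ≤ (b - 1) * (α - σ * ηR) := by
        rw [← div_le_iff₀ hR]; linarith
      have hgbe : g b = α * b - σ * (ηR * (b - 1) + 1) := by
        simp only [hg, hf]
        rw [if_neg (by linarith), if_neg (by linarith), if_neg (by linarith)]
      rw [hgbe]; nlinarith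
    obtain ⟨v, _, hv⟩ := intermediate_value_Icc hab hgc.continuousOn ⟨hga, hgb⟩
    exact ⟨v, hv⟩
  refine ⟨(v, f v), ⟨rfl, by simpa [hg] using hv⟩, ?_⟩
  rintro ⟨x, y⟩ ⟨h1', h2'⟩
  simp only at h1' h2'
  have hx : g x = lam := by simp only [hg, h1']; exact h2'
  have hxv : x = v := hmono.injective (hx.trans hv.symm)
  subst hxv
  simp [← h1']
end

section
/- Let α > 0, σ ≥ 0 and suppose α - σ η_L > 0, α - σ η_1 > 0, α - σ η_2 > 0 and α - σ η_R > 0. If 0 < λ ≤ (α - σ η_1) v_1, then the unique solution (v, w) of the system f(v) = w, α v - σ w = λ is (v, w) = (λ/(α - σ η_1), η_1 λ/(α - σ η_1)), and it satisfies 0 < v ≤ v_1 (the equilibrium is admissible, lying in the closure of the region 0 < v < v_1). -/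
/-- Under the stated sign conditions, if `0 < λ ≤ (α - σ η₁) v₁` then the
unique solution of `f v = w`, `α v - σ w = λ` is
`(v, w) = (λ/(α - σ η₁), η₁ λ/(α - σ η₁))`, and it satisfies `0 < v ≤ v₁`
(the equilibrium is admissible). -/
theorem stmt2 (α σ ηL η1 η2 ηR v1 w1 lam : ℝ)
    (hv1 : 0 < v1) (hv1' : v1 < 1) (hw1 : 0 < w1) (hw1' : w1 < 1)
    (hη1 : η1 = w1 / v1) (hη2 : η2 = (1 - w1) / (1 - v1))
    (hηL : ηL < 0) (hηR : ηR < 0)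
    (f : ℝ → ℝ)
    (hf : ∀ v : ℝ, f v =
      if v ≤ 0 then ηL * v
      else if v ≤ v1 then η1 * v
      else if v ≤ 1 then η2 * (v - v1) + w1
      else ηR * (v - 1) + 1)
    (hα : 0 < α) (hσ : 0 ≤ σ)
    (hL : 0 < α - σ * ηL) (h1 : 0 < α - σ * η1)
    (h2 : 0 < α - σ * η2) (hR : 0 < α - σ * ηR)
    (hlam0 : 0 < lam) (hlam1 : lam ≤ (α - σ * η1) * v1) :
    (f (lam / (α - σ * η1)) = η1 * lam / (α - σ * η1) ∧
      α * (lam / (α - σ * η1)) - σ * (η1 * lam / (α - σ * η1)) = lam) ∧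
    (0 < lam / (α - σ * η1) ∧ lam / (α - σ * η1) ≤ v1) ∧
    (∀ v w : ℝ, f v = w → α * v - σ * w = lam →
      v = lam / (α - σ * η1) ∧ w = η1 * lam / (α - σ * η1)) := by
  have hdne : (α - σ * η1) ≠ 0 := ne_of_gt h1
  have hw1e : η1 * v1 = w1 := by
    rw [hη1]; field_simp
  have hw2e : η2 * (1 - v1) = 1 - w1 := by
    have hne : (1:ℝ) - v1 ≠ 0 := by linarith
    rw [hη2]; field_simp
  have hvpos : 0 < lam / (α - σ * η1) := div_pos hlam0 h1
  have hvle : lam / (α - σ * η1) ≤ v1 := by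
    rw [div_le_iff₀ h1]; nlinarith
  refine ⟨⟨?_, ?_⟩, ⟨hvpos, hvle⟩, ?_⟩
  · rw [hf, if_neg (by linarith), if_pos hvle]; ring
  · field_simp
  · intro v w hfw heq
    rw [hf] at hfw
    by_cases h0 : v ≤ 0
    · rw [if_pos h0] at hfw
      subst hfw
      exfalso
      nlinarith [mul_nonpos_of_nonneg_of_nonpos (le_of_lt hL) h0]
    · rw [if_neg h0] at hfw
      push_neg at h0
      by_cases hA : v ≤ v1
      · rw [if_pos hA] at hfw
        subst hfw
        have hv : v = lam / (α - σ * η1) := by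
          rw [eq_div_iff hdne]; linarith [heq]; 
        constructor
        · exact hv
        · rw [hv]; ring
      · rw [if_neg hA] at hfw
        push_neg at hA
        exfalso
        by_cases hB : v ≤ 1
        · rw [if_pos hB] at hfw
          subst hfw
          nlinarith [mul_pos h2 (sub_pos.mpr hA)]
        · rw [if_neg hB] at hfw
          subst hfw
          push_neg at hB
          nlinarith [mul_pos hR (sub_pos.mpr hB), mul_pos h2 (sub_pos.mpr hv1')]
end

section
/- Let ε > 0, α > 0, σ ≥ 0, λ ∈ ℝ and η_1 ∈ ℝ with (η_1 + εσ)² < 4εα, and set ω_1 = ½√(4εα - (η_1 + εσ)²), v_1* = λ/(α - σ η_1), w_1* = η_1 v_1*. Let (v(t), w(t)) be the solution of v' = η_1 v - w, w' = ε(αv - σw - λ) with initial condition (v(0), w(0)) = (0, 0). Then at the half-period time T = π/ω_1 one has (v(T), w(T)) = (1 + E)(v_1*, w_1*), where E = e^{(η_1 - εσ)π/(2ω_1)}; in particular w(T) = η_1 v(T) (the point lies on the v-nullcline), and v(T) = v_1 holds if and only if λ = (α v_1 - σ w_1)/(1 + E) where w_1 = η_1 v_1. -/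
open Complex Real


/-- For the focus-case linear piece `v' = η₁ v - w`, `w' = ε(αv - σw - λ)`
started at the origin, at the half-period `T = π/ω₁` one has
`(v T, w T) = (1 + E) • (v₁*, w₁*)` where `E = e^{(η₁ - εσ)π/(2ω₁)}`; in particular
`w T = η₁ v T`, and `v T = v₁` iff `λ = (α v₁ - σ w₁)/(1 + E)` with `w₁ = η₁ v₁`. -/
theorem stmt8 (ε α σ lam η1 ω1 v1s w1s v1 T E : ℝ)
    (hε : 0 < ε) (hα : 0 < α) (hσ : 0 ≤ σ)
    (hdisc : (η1 + ε * σ) ^ 2 < 4 * ε * α)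
    (hω : ω1 = Real.sqrt (4 * ε * α - (η1 + ε * σ) ^ 2) / 2)
    (hvs : v1s = lam / (α - σ * η1)) (hws : w1s = η1 * v1s)
    (hT : T = Real.pi / ω1) (hE : E = Real.exp ((η1 - ε * σ) * Real.pi / (2 * ω1)))
    (v w : ℝ → ℝ) (hv0 : v 0 = 0) (hw0 : w 0 = 0)
    (hv : ∀ t : ℝ, HasDerivAt v (η1 * v t - w t) t)
    (hw : ∀ t : ℝ, HasDerivAt w (ε * (α * v t - σ * w t - lam)) t) :
    v T = (1 + E) * v1s ∧ w T = (1 + E) * w1s ∧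
    w T = η1 * v T ∧
    (v T = v1 ↔ lam = (α * v1 - σ * (η1 * v1)) / (1 + E)) := by
  have hdpos : 0 < 4 * ε * α - (η1 + ε * σ) ^ 2 := by linarith
  have hω1 : 0 < ω1 := by rw [hω]; positivity
  have hαση : 0 < α - σ * η1 := by nlinarith [sq_nonneg (η1 - ε * σ)]
  have hω2 : ω1 ^ 2 = ε * α - ((η1 + ε * σ) / 2) ^ 2 := by
    rw [hω, div_pow, Real.sq_sqrt hdpos.le]; ring
  have hlam : (α - σ * η1) * v1s = lam := by
    rw [hvs, mul_div_cancel₀ _ hαση.ne']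
  set c : ℂ := ((η1 : ℂ) - ε * σ) / 2 + ω1 * I with hc
  set d : ℂ := ((η1 : ℂ) + ε * σ) / 2 + ω1 * I with hd
  set ξ : ℝ → ℂ := fun t => d * ((v t : ℂ) - v1s) - ((w t : ℂ) - w1s) with hξ
  set g : ℝ → ℂ := fun t => Complex.exp (-c * t) * ξ t with hg
  have hω2c : (ω1 : ℂ) ^ 2 = (ε : ℂ) * α - (((η1 : ℂ) + ε * σ) / 2) ^ 2 := by
    have := congrArg (Complex.ofReal) hω2; push_cast at this ⊢; exact this
  have hwsC : (w1s : ℂ) = (η1 : ℂ) * v1s := by exact_mod_cast congrArg Complex.ofReal hws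
  have hlamC : ((α : ℂ) - σ * η1) * v1s = lam := by exact_mod_cast congrArg Complex.ofReal hlam
  have key : ∀ x y : ℝ,
      d * ((η1 * x - y : ℝ) : ℂ) - ((ε * (α * x - σ * y - lam) : ℝ) : ℂ)
        = c * (d * ((x : ℂ) - v1s) - ((y : ℂ) - w1s)) := by
    intro x y
    rw [hc, hd, hwsC]
    push_cast
    linear_combination ((x : ℂ) - (v1s : ℂ)) * hω2c
      + ((v1s : ℂ) - x) * (ω1 : ℂ) ^ 2 * Complex.I_sq
      - (ε : ℂ) * hlamC
  have hξd : ∀ t, HasDerivAt ξ (c * ξ t) t := by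
    intro t
    have h1 : HasDerivAt (fun t => ((v t : ℂ) - v1s)) ((η1 * v t - w t : ℝ) : ℂ) t :=
      ((hv t).ofReal_comp).sub_const _
    have h2 : HasDerivAt (fun t => ((w t : ℂ) - w1s)) ((ε * (α * v t - σ * w t - lam) : ℝ) : ℂ) t :=
      ((hw t).ofReal_comp).sub_const _
    have h3 := (h1.const_mul d).sub h2
    rw [show c * ξ t = d * ((η1 * v t - w t : ℝ) : ℂ) - ((ε * (α * v t - σ * w t - lam) : ℝ) : ℂ)
      from (key (v t) (w t)).symm]
    exact h3
  have hgd : ∀ t, HasDerivAt g 0 t := by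
    intro t
    have h0 : HasDerivAt (fun t : ℝ => -c * (t : ℂ)) (-c) t := by
      simpa using ((hasDerivAt_id t).ofReal_comp).const_mul (-c)
    have he : HasDerivAt (fun t : ℝ => Complex.exp (-c * t)) (-c * Complex.exp (-c * t)) t := by
      simpa [mul_comm] using h0.cexp
    have h4 := he.mul (hξd t)
    convert h4 using 1
    · rfl
    · rfl
    ring
  have hgc : g T = g 0 := by
    have hdiff : Differentiable ℝ g := fun t => (hgd t).differentiableAt
    exact is_const_of_deriv_eq_zero hdiff (fun t => (hgd t).deriv) T 0
  have hexpT : Complex.exp (c * T) = -(E : ℂ) := by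
    have hωT : ω1 * T = Real.pi := by rw [hT]; field_simp
    have h5 : c * T = (((η1 - ε * σ) / 2 * T : ℝ) : ℂ) + (Real.pi : ℂ) * I := by
      rw [hc]; push_cast; rw [← hωT]; push_cast; ring
    rw [h5, Complex.exp_add, Complex.exp_pi_mul_I]
    have h6 : (E : ℂ) = Complex.exp ((((η1 - ε * σ) / 2 * T : ℝ)) : ℂ) := by
      rw [hE, hT, ← Complex.ofReal_exp, Complex.ofReal_inj]
      congr 1
      field_simp
    rw [h6]; ring
  have hξT : ξ T = -(E : ℂ) * ξ 0 := by
    have h1 : Complex.exp (-c * T) * ξ T = Complex.exp (-c * 0) * ξ 0 := hgc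
    have h1' := congrArg (fun z => Complex.exp (c * T) * z) h1
    simp only [← mul_assoc, ← Complex.exp_add] at h1'
    rw [show c * ↑T + -c * ↑T = 0 by ring] at h1'
    rw [show c * ↑T + -c * 0 = c * ↑T by ring] at h1'
    rw [Complex.exp_zero, one_mul, hexpT] at h1'
    exact h1'
  have him : ω1 * (v T - v1s) = E * (ω1 * v1s) := by
    have h7 := congrArg Complex.im hξT
    simp only [hξ, hd, hv0, hw0] at h7
    simp [Complex.add_im, Complex.mul_im, Complex.sub_im, Complex.ofReal_im,
      Complex.ofReal_re, Complex.I_im, Complex.I_re, Complex.neg_im, Complex.neg_re,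
      Complex.mul_re, Complex.sub_re, Complex.add_re, Complex.div_im, Complex.div_re] at h7
    linarith [h7]
  have hre : (η1 + ε * σ) / 2 * (v T - v1s) - (w T - w1s)
      = E * ((η1 + ε * σ) / 2 * v1s - w1s) := by
    have h8 := congrArg Complex.re hξT
    simp only [hξ, hd, hv0, hw0] at h8
    simp [Complex.add_re, Complex.mul_re, Complex.sub_re, Complex.ofReal_im,
      Complex.ofReal_re, Complex.I_im, Complex.I_re, Complex.neg_re,
      Complex.mul_im, Complex.sub_im, Complex.add_im, Complex.div_im, Complex.div_re] at h8
    linarith [h8]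
  have hvT : v T = (1 + E) * v1s := by
    have h9 : ω1 * (v T - v1s) = ω1 * (E * v1s) := by linarith [him]
    have := mul_left_cancel₀ hω1.ne' h9
    linarith
  have hwT : w T = (1 + E) * w1s := by
    rw [hvT] at hre; linarith [hre]
  have hEpos : 0 < 1 + E := by rw [hE]; positivity
  refine ⟨hvT, hwT, by rw [hvT, hwT, hws]; ring, ?_⟩
  constructor
  · intro h
    rw [hvT, hvs] at h
    rw [eq_div_iff hEpos.ne']
    field_simp at h
    linear_combination h
  · intro h
    rw [hvT, hvs, h]
    field_simp
end

section
/- Let A be the 2×2 real matrix with rows [η, -1] and [εα, -εσ] (so its (1,2) entry is -1 ≠ 0), let D ≠ 0, e₂ = (0,1)ᵀ, and Θ(t) = D² ∫₀ᵗ (e^{As} e₂)(e^{As} e₂)ᵀ ds. Then for every t > 0 the matrix Θ(t) is positive definite; in particular det Θ(t) > 0, even though the noise enters only the second coordinate. -/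
open Matrix


lemma entryDeriv (A : Matrix (Fin 2) (Fin 2) ℝ) (s : ℝ) (i j : Fin 2) :
    HasDerivAt (fun u : ℝ => NormedSpace.exp (u • A) i j)
      ((NormedSpace.exp (s • A) * A) i j) s := by
  letI : NormedRing (Matrix (Fin 2) (Fin 2) ℝ) := Matrix.linftyOpNormedRing
  letI : NormedAlgebra ℝ (Matrix (Fin 2) (Fin 2) ℝ) := Matrix.linftyOpNormedAlgebra
  have h := hasDerivAt_exp_smul_const (𝕂 := ℝ) A s
  have hL : Continuous (fun M : Matrix (Fin 2) (Fin 2) ℝ => M i j) := by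
    exact (continuous_apply j).comp (continuous_apply i)
  let L : Matrix (Fin 2) (Fin 2) ℝ →L[ℝ] ℝ :=
    { toLinearMap := (LinearMap.proj (R := ℝ) (φ := fun _ : Fin 2 => ℝ) j).comp
        (LinearMap.proj (R := ℝ) (φ := fun _ : Fin 2 => Fin 2 → ℝ) i),
      cont := hL }
  exact L.hasFDerivAt.comp_hasDerivAt s h

lemma sqIntPos {f : ℝ → ℝ} (hf : Continuous f) {δ t : ℝ} (hδ : 0 < δ) (ht : 0 < t)
    (hne : ∀ s ∈ Set.Ioo (0:ℝ) δ, f s ≠ 0) :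
    0 < ∫ s in (0:ℝ)..t, (f s) ^ 2 := by
  set c := min δ t with hc
  have hc0 : 0 < c := lt_min hδ ht
  have hct : c ≤ t := min_le_right _ _
  have h1 : 0 < ∫ s in (0:ℝ)..c, (f s) ^ 2 := by
    apply intervalIntegral.intervalIntegral_pos_of_pos_on
    · exact ((hf.pow 2)).intervalIntegrable 0 c
    · intro s hs
      have := hne s ⟨hs.1, lt_of_lt_of_le hs.2 (min_le_left _ _)⟩
      positivity
    · exact hc0
  have h2 : 0 ≤ ∫ s in c..t, (f s) ^ 2 :=
    intervalIntegral.integral_nonneg hct (fun s _ => sq_nonneg _)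
  have h3 := intervalIntegral.integral_add_adjacent_intervals
    ((hf.pow 2).intervalIntegrable (μ := MeasureTheory.volume) 0 c) ((hf.pow 2).intervalIntegrable (μ := MeasureTheory.volume) c t)
  simp only [Pi.pow_apply] at h3
  linarith


/-- For `A = !![η, -1; εα, -εσ]` (whose (1,2) entry `-1` is nonzero),
`D ≠ 0`, `e₂ = (0,1)ᵀ` and `Θ(t) = D² ∫₀ᵗ (e^{As} e₂)(e^{As} e₂)ᵀ ds`, the matrix `Θ(t)`
is positive definite for every `t > 0`; in particular `det Θ(t) > 0`. -/
theorem stmt14 (η ε α σ D : ℝ) (hD : D ≠ 0)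
    (A : Matrix (Fin 2) (Fin 2) ℝ) (hA : A = !![η, -1; ε * α, -(ε * σ)])
    (Θ : ℝ → Matrix (Fin 2) (Fin 2) ℝ)
    (hΘ : ∀ (t : ℝ) (i j : Fin 2), Θ t i j =
      D ^ 2 * ∫ s in (0:ℝ)..t,
        ((NormedSpace.exp (s • A)).mulVec ![0, 1]) i *
        ((NormedSpace.exp (s • A)).mulVec ![0, 1]) j) :
    ∀ t : ℝ, 0 < t → (Θ t).PosDef ∧ 0 < (Θ t).det := by
  intro t ht
  set E : ℝ → Matrix (Fin 2) (Fin 2) ℝ := fun s => NormedSpace.exp (s • A) with hE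
  have hΘ' : ∀ (u : ℝ) (i j : Fin 2), Θ u i j =
      D ^ 2 * ∫ s in (0:ℝ)..u, E s i 1 * E s j 1 := by
    intro u i j
    rw [hΘ]
    congr 1
    apply intervalIntegral.integral_congr
    intro s _
    simp [Matrix.mulVec, dotProduct, Fin.sum_univ_two, hE]
  have hcE : ∀ i j : Fin 2, Continuous fun s => E s i j := fun i j =>
    continuous_iff_continuousAt.mpr fun s => (entryDeriv A s i j).continuousAt
  have hE0 : E 0 = 1 := by rw [hE]; simp [NormedSpace.exp_zero]
  -- Hermitian
  have herm : (Θ t).IsHermitian := by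
    ext i j
    simp only [conjTranspose_apply, hΘ', star_trivial]
    congr 1
    exact intervalIntegral.integral_congr fun s _ => mul_comm _ _
  -- quadratic form
  have quad : ∀ x : Fin 2 → ℝ, x ≠ 0 → 0 < x ⬝ᵥ (Θ t *ᵥ x) := by
    intro x hx
    set f : ℝ → ℝ := fun s => x 0 * E s 0 1 + x 1 * E s 1 1 with hf
    have hfc : Continuous f := (continuous_const.mul (hcE 0 1)).add (continuous_const.mul (hcE 1 1))
    have hfd : HasDerivAt f (x 0 * ((E 0 * A) 0 1) + x 1 * ((E 0 * A) 1 1)) 0 :=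
      ((entryDeriv A 0 0 1).const_mul (x 0)).add ((entryDeriv A 0 1 1).const_mul (x 1))
    have hf0 : f 0 = x 1 := by simp [hf, hE0, Matrix.one_apply]
    -- integrability of products
    have hii : ∀ i j : Fin 2, IntervalIntegrable (fun s => E s i 1 * E s j 1)
        MeasureTheory.volume 0 t := fun i j => ((hcE i 1).mul (hcE j 1)).intervalIntegrable 0 t
    -- identity
    have hsq : ∫ s in (0:ℝ)..t, (f s) ^ 2 =
        x 0 ^ 2 * (∫ s in (0:ℝ)..t, E s 0 1 * E s 0 1)
        + (2 * (x 0 * x 1)) * (∫ s in (0:ℝ)..t, E s 0 1 * E s 1 1)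
        + x 1 ^ 2 * (∫ s in (0:ℝ)..t, E s 1 1 * E s 1 1) := by
      rw [show (fun s => (f s) ^ 2) = fun s =>
          (x 0 ^ 2 * (E s 0 1 * E s 0 1) + (2 * (x 0 * x 1)) * (E s 0 1 * E s 1 1))
          + x 1 ^ 2 * (E s 1 1 * E s 1 1) from funext fun s => by simp only [hf]; ring]
      rw [intervalIntegral.integral_add (((hii 0 0).const_mul _).add ((hii 0 1).const_mul _))
            ((hii 1 1).const_mul _),
          intervalIntegral.integral_add ((hii 0 0).const_mul _) ((hii 0 1).const_mul _),
          intervalIntegral.integral_const_mul, intervalIntegral.integral_const_mul,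
          intervalIntegral.integral_const_mul]
    have hI : (∫ s in (0:ℝ)..t, E s 1 1 * E s 0 1) = ∫ s in (0:ℝ)..t, E s 0 1 * E s 1 1 :=
      intervalIntegral.integral_congr fun s _ => mul_comm _ _
    have key : x ⬝ᵥ (Θ t *ᵥ x) = D ^ 2 * ∫ s in (0:ℝ)..t, (f s) ^ 2 := by
      simp only [dotProduct, Matrix.mulVec, Fin.sum_univ_two, hΘ', hsq, hI]
      ring
    rw [key]
    have hD2 : 0 < D ^ 2 := by positivity
    refine mul_pos hD2 ?_
    -- find δ with f ≠ 0 on (0, δ)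
    have hev : ∀ᶠ s in nhds (0:ℝ), s ≠ 0 → f s ≠ 0 := by
      by_cases hx1 : x 1 ≠ 0
      · have : f 0 ≠ 0 := by rw [hf0]; exact hx1
        exact (hfc.continuousAt.eventually_ne this).mono fun s h _ => h
      · push_neg at hx1
        have hx0 : x 0 ≠ 0 := by
          intro h0
          apply hx
          funext i
          fin_cases i <;> simp [h0, hx1]
        have hd : x 0 * ((E 0 * A) 0 1) + x 1 * ((E 0 * A) 1 1) = -x 0 := by
          rw [hE0, one_mul, hA, hx1]
          simp
        rw [hd] at hfd
        have hslope := hasDerivAt_iff_tendsto_slope.mp hfd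
        have hne : ∀ᶠ s in nhdsWithin (0:ℝ) {(0:ℝ)}ᶜ, slope f 0 s ≠ 0 :=
          hslope.eventually_ne (neg_ne_zero.mpr hx0)
        rw [eventually_nhdsWithin_iff] at hne
        refine hne.mono fun s h hs => ?_
        have := h hs
        simp only [slope_def_field, hf0, hx1] at this
        intro hfs
        apply this
        rw [hfs]
        simp [div_eq_zero_iff]
      -- end cases
    rw [Metric.eventually_nhds_iff] at hev
    obtain ⟨δ, hδ, hball⟩ := hev
    refine sqIntPos hfc hδ ht fun s hs => ?_
    exact hball (by rw [Real.dist_eq, sub_zero, abs_of_pos hs.1]; exact hs.2) hs.1.ne'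
  have pd : (Θ t).PosDef := by
    refine Matrix.PosDef.of_dotProduct_mulVec_pos herm fun x hx => ?_
    have : star x = x := by funext i; simp
    rw [this]
    exact quad x hx
  exact ⟨pd, pd.det_pos⟩
end

section
/- Let η, ε, α, σ, λ ∈ ℝ, D ≠ 0, and let A be the 2×2 matrix with rows [η, -1] and [εα, -εσ]. Let (v̄(t), w̄(t)) be the solution of the deterministic system v̄' = η v̄ - w̄, w̄' = ε(α v̄ - σ w̄ - λ) with initial condition (v₀, w₀), and let Θ(t) = D² ∫₀ᵗ (e^{As} e₂)(e^{As} e₂)ᵀ ds, which is positive definite for t > 0. Define, for t > 0, the Gaussian density p_t(v,w) = (2π√(det Θ(t)))^{-1} exp(-½ Δzᵀ Θ(t)^{-1} Δz) where Δz = (v - v̄(t), w - w̄(t))ᵀ. Then p satisfies the Fokker–Planck equation: for all t > 0 and all (v,w) ∈ ℝ², ∂p_t/∂t = -∂/∂v[(ηv - w) p_t] - ∂/∂w[ε(αv - σw - λ) p_t - (D²/2) ∂p_t/∂w]. -/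
set_option maxHeartbeats 2000000

open Matrix

theorem fp_core (η ε α σ lam D : ℝ) (a b c m n : ℝ → ℝ) (t : ℝ)
    (a' b' c' m' n' : ℝ)
    (ha : HasDerivAt a a' t) (hb : HasDerivAt b b' t) (hc : HasDerivAt c c' t)
    (hm : HasDerivAt m m' t) (hn : HasDerivAt n n' t)
    (ha' : a' = 2 * (η * a t - b t))
    (hb' : b' = ε * α * a t + (η - ε * σ) * b t - c t)
    (hc' : c' = 2 * ε * (α * b t - σ * c t) + D ^ 2)
    (hm' : m' = η * m t - n t)
    (hn' : n' = ε * (α * m t - σ * n t - lam))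
    (hd : 0 < a t * c t - b t ^ 2) (v w : ℝ) :
    deriv (fun τ => (2 * Real.pi * Real.sqrt (a τ * c τ - b τ ^ 2))⁻¹ *
      Real.exp (-(1 / 2) * ((a τ * c τ - b τ ^ 2)⁻¹ *
        (c τ * (v - m τ) ^ 2 - 2 * b τ * (v - m τ) * (w - n τ) + a τ * (w - n τ) ^ 2)))) t =
    -(deriv (fun x => (η * x - w) * ((2 * Real.pi * Real.sqrt (a t * c t - b t ^ 2))⁻¹ *
      Real.exp (-(1 / 2) * ((a t * c t - b t ^ 2)⁻¹ *
        (c t * (x - m t) ^ 2 - 2 * b t * (x - m t) * (w - n t) + a t * (w - n t) ^ 2))))) v)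
    - deriv (fun y => ε * (α * v - σ * y - lam) *
        ((2 * Real.pi * Real.sqrt (a t * c t - b t ^ 2))⁻¹ *
          Real.exp (-(1 / 2) * ((a t * c t - b t ^ 2)⁻¹ *
            (c t * (v - m t) ^ 2 - 2 * b t * (v - m t) * (y - n t) + a t * (y - n t) ^ 2))))
        - D ^ 2 / 2 * deriv (fun y' => (2 * Real.pi * Real.sqrt (a t * c t - b t ^ 2))⁻¹ *
          Real.exp (-(1 / 2) * ((a t * c t - b t ^ 2)⁻¹ *
            (c t * (v - m t) ^ 2 - 2 * b t * (v - m t) * (y' - n t) + a t * (y' - n t) ^ 2)))) y)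
      w := by
  have hd0 : a t * c t - b t ^ 2 ≠ 0 := ne_of_gt hd
  have hS : 0 < Real.sqrt (a t * c t - b t ^ 2) := Real.sqrt_pos.mpr hd
  have hS0 : Real.sqrt (a t * c t - b t ^ 2) ≠ 0 := ne_of_gt hS
  -- derivative in τ
  have hdd : HasDerivAt (fun τ => a τ * c τ - b τ ^ 2) (a' * c t + a t * c' - 2 * b t * b') t := by
    have h := (ha.mul hc).sub (hb.pow 2)
    exact h.congr_deriv (by beta_reduce; (try simp only [id_eq]); push_cast; ring)
  have hx : HasDerivAt (fun τ => v - m τ) (-m') t := hm.const_sub v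
  have hy : HasDerivAt (fun τ => w - n τ) (-n') t := hn.const_sub w
  have hN : HasDerivAt (fun τ => c τ * (v - m τ) ^ 2 - 2 * b τ * (v - m τ) * (w - n τ)
      + a τ * (w - n τ) ^ 2)
      (c' * (v - m t) ^ 2 - 2 * c t * (v - m t) * m'
        - (2 * b' * (v - m t) * (w - n t) - 2 * b t * (m' * (w - n t) + (v - m t) * n'))
        + (a' * (w - n t) ^ 2 - 2 * a t * (w - n t) * n')) t := by
    have h := ((hc.mul (hx.pow 2)).sub (((hb.const_mul 2).mul hx).mul hy)).add (ha.mul (hy.pow 2))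
    exact h.congr_deriv (by simp only [Pi.pow_apply, Pi.mul_apply]; push_cast; ring)
  have hdinv := hdd.inv hd0
  have hQ := (hdinv.mul hN).const_mul (-(1 / 2) : ℝ)
  have hE := hQ.exp
  have hsq : HasDerivAt (fun τ => Real.sqrt (a τ * c τ - b τ ^ 2))
      ((a' * c t + a t * c' - 2 * b t * b') / (2 * Real.sqrt (a t * c t - b t ^ 2))) t :=
    hdd.sqrt hd0
  have hKt := (hsq.const_mul (2 * Real.pi)).inv
    (mul_ne_zero (by positivity) hS0)
  have hKt' : HasDerivAt (fun τ => (2 * Real.pi * Real.sqrt (a τ * c τ - b τ ^ 2))⁻¹)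
      (-(1 / 2) * ((a' * c t + a t * c' - 2 * b t * b') / (a t * c t - b t ^ 2)) *
        (2 * Real.pi * Real.sqrt (a t * c t - b t ^ 2))⁻¹) t := by
    refine hKt.congr_deriv ?_
    symm
    rw [show (2 * Real.pi * Real.sqrt (a t * c t - b t ^ 2)) ^ 2
        = (2 * Real.pi) ^ 2 * (a t * c t - b t ^ 2) from by
      rw [mul_pow, Real.sq_sqrt hd.le]]
    field_simp
  have htau := hKt'.mul hE
  simp only [Pi.mul_def, Pi.inv_def] at htau
  rw [htau.deriv]
  -- derivative in x at v
  have hid : HasDerivAt (fun x : ℝ => η * x - w) η v := by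
    simpa using ((hasDerivAt_id v).const_mul η).sub_const w
  have hxN : HasDerivAt (fun x => c t * (x - m t) ^ 2 - 2 * b t * (x - m t) * (w - n t)
      + a t * (w - n t) ^ 2)
      (2 * c t * (v - m t) - 2 * b t * (w - n t)) v := by
    have h := (((((hasDerivAt_id v).sub_const (m t)).pow 2).const_mul (c t)).sub
        ((((hasDerivAt_id v).sub_const (m t)).const_mul (2 * b t)).mul_const (w - n t))).add_const
        (a t * (w - n t) ^ 2)
    exact h.congr_deriv (by beta_reduce; (try simp only [id_eq]); push_cast; ring)
  have hxq := ((((hxN.const_mul ((a t * c t - b t ^ 2)⁻¹)).const_mul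
      (-(1 / 2) : ℝ)).exp).const_mul ((2 * Real.pi * Real.sqrt (a t * c t - b t ^ 2))⁻¹))
  have hRv := hid.mul hxq
  simp only [Pi.mul_def] at hRv
  rw [hRv.deriv]
  -- derivative function in y'
  have hyN : ∀ y : ℝ, HasDerivAt (fun y' => c t * (v - m t) ^ 2
      - 2 * b t * (v - m t) * (y' - n t) + a t * (y' - n t) ^ 2)
      (2 * a t * (y - n t) - 2 * b t * (v - m t)) y := by
    intro y
    have h := ((hasDerivAt_const y (c t * (v - m t) ^ 2)).sub
        (((hasDerivAt_id y).sub_const (n t)).const_mul (2 * b t * (v - m t)))).add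
        ((((hasDerivAt_id y).sub_const (n t)).pow 2).const_mul (a t))
    exact h.congr_deriv (by beta_reduce; (try simp only [id_eq]); push_cast; ring)
  have hyq : ∀ y : ℝ, HasDerivAt (fun y' => (2 * Real.pi * Real.sqrt (a t * c t - b t ^ 2))⁻¹ *
      Real.exp (-(1 / 2) * ((a t * c t - b t ^ 2)⁻¹ *
        (c t * (v - m t) ^ 2 - 2 * b t * (v - m t) * (y' - n t) + a t * (y' - n t) ^ 2))))
      ((2 * Real.pi * Real.sqrt (a t * c t - b t ^ 2))⁻¹ *
        (Real.exp (-(1 / 2) * ((a t * c t - b t ^ 2)⁻¹ *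
          (c t * (v - m t) ^ 2 - 2 * b t * (v - m t) * (y - n t) + a t * (y - n t) ^ 2))) *
         (-(1 / 2) * ((a t * c t - b t ^ 2)⁻¹ *
          (2 * a t * (y - n t) - 2 * b t * (v - m t)))))) y := fun y =>
    ((((hyN y).const_mul ((a t * c t - b t ^ 2)⁻¹)).const_mul (-(1 / 2) : ℝ)).exp).const_mul _
  have hrw : (fun y => ε * (α * v - σ * y - lam) *
        ((2 * Real.pi * Real.sqrt (a t * c t - b t ^ 2))⁻¹ *
          Real.exp (-(1 / 2) * ((a t * c t - b t ^ 2)⁻¹ *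
            (c t * (v - m t) ^ 2 - 2 * b t * (v - m t) * (y - n t) + a t * (y - n t) ^ 2))))
        - D ^ 2 / 2 * deriv (fun y' => (2 * Real.pi * Real.sqrt (a t * c t - b t ^ 2))⁻¹ *
          Real.exp (-(1 / 2) * ((a t * c t - b t ^ 2)⁻¹ *
            (c t * (v - m t) ^ 2 - 2 * b t * (v - m t) * (y' - n t) + a t * (y' - n t) ^ 2)))) y)
      = fun y => ε * (α * v - σ * y - lam) *
        ((2 * Real.pi * Real.sqrt (a t * c t - b t ^ 2))⁻¹ *
          Real.exp (-(1 / 2) * ((a t * c t - b t ^ 2)⁻¹ *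
            (c t * (v - m t) ^ 2 - 2 * b t * (v - m t) * (y - n t) + a t * (y - n t) ^ 2))))
        - D ^ 2 / 2 * ((2 * Real.pi * Real.sqrt (a t * c t - b t ^ 2))⁻¹ *
          (Real.exp (-(1 / 2) * ((a t * c t - b t ^ 2)⁻¹ *
            (c t * (v - m t) ^ 2 - 2 * b t * (v - m t) * (y - n t) + a t * (y - n t) ^ 2))) *
           (-(1 / 2) * ((a t * c t - b t ^ 2)⁻¹ *
            (2 * a t * (y - n t) - 2 * b t * (v - m t)))))) :=
    funext fun y => by rw [(hyq y).deriv]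
  rw [hrw]
  -- derivative at w of the rewritten function
  have h1 : HasDerivAt (fun y : ℝ => ε * (α * v - σ * y - lam)) (-(ε * σ)) w := by
    have h := ((((hasDerivAt_id w).const_mul σ).const_sub (α * v)).sub_const lam).const_mul ε
    exact h.congr_deriv (by ring)
  have h2 := hyq w
  have hP : HasDerivAt (fun y : ℝ => -(1 / 2) * ((a t * c t - b t ^ 2)⁻¹ *
      (2 * a t * (y - n t) - 2 * b t * (v - m t))))
      (-(1 / 2) * ((a t * c t - b t ^ 2)⁻¹ * (2 * a t))) w := by
    have h := (((((hasDerivAt_id w).sub_const (n t)).const_mul (2 * a t)).sub_const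
        (2 * b t * (v - m t))).const_mul ((a t * c t - b t ^ 2)⁻¹)).const_mul (-(1 / 2) : ℝ)
    exact h.congr_deriv (by ring)
  have hEy := (((hyN w).const_mul ((a t * c t - b t ^ 2)⁻¹)).const_mul (-(1 / 2) : ℝ)).exp
  have h3 := (hEy.mul hP).const_mul ((2 * Real.pi * Real.sqrt (a t * c t - b t ^ 2))⁻¹)
  have hfull := (h1.mul h2).sub (h3.const_mul (D ^ 2 / 2))
  simp only [Pi.mul_def, Pi.sub_def] at hfull
  rw [hfull.deriv]
  beta_reduce
  subst ha' hb' hc' hm' hn'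
  generalize hEgen : Real.exp (-(1 / 2) * ((a t * c t - b t ^ 2)⁻¹ *
    (c t * (v - m t) ^ 2 - 2 * b t * (v - m t) * (w - n t) + a t * (w - n t) ^ 2))) = E
  generalize hKgen : (2 * Real.pi * Real.sqrt (a t * c t - b t ^ 2))⁻¹ = K
  field_simp
  ring

theorem fp_entry_deriv (A : Matrix (Fin 2) (Fin 2) ℝ) :
    ∀ (i j : Fin 2) (s : ℝ),
      HasDerivAt (fun s : ℝ => NormedSpace.exp (s • A) i j)
        ((A * NormedSpace.exp (s • A)) i j) s := by
  letI : SeminormedRing (Matrix (Fin 2) (Fin 2) ℝ) := Matrix.linftyOpSemiNormedRing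
  letI : NormedRing (Matrix (Fin 2) (Fin 2) ℝ) := Matrix.linftyOpNormedRing
  letI : NormedAlgebra ℝ (Matrix (Fin 2) (Fin 2) ℝ) := Matrix.linftyOpNormedAlgebra
  intro i j s
  have hM : HasDerivAt (fun u : ℝ => NormedSpace.exp (u • A))
      (A * NormedSpace.exp (s • A)) s := hasDerivAt_exp_smul_const' A s
  let L : Matrix (Fin 2) (Fin 2) ℝ →L[ℝ] ℝ :=
    LinearMap.toContinuousLinearMap (Matrix.entryLinearMap ℝ ℝ i j)
  have h := L.hasFDerivAt.comp_hasDerivAt s hM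
  simp [L, Function.comp] at h
  exact h

/-- The Gaussian transition density of the Ornstein–Uhlenbeck process
arising from a linear piece of the PWL FitzHugh–Nagumo system (mean given by the
deterministic solution, covariance `Θ(t)`) satisfies the Fokker–Planck equation
`∂p/∂t = -∂/∂v[(ηv - w)p] - ∂/∂w[ε(αv - σw - λ)p - (D²/2) ∂p/∂w]` for all `t > 0`. -/
theorem stmt15 (η ε α σ lam D v0 w0 : ℝ) (hD : D ≠ 0)
    (A : Matrix (Fin 2) (Fin 2) ℝ) (hA : A = !![η, -1; ε * α, -(ε * σ)])
    (vbar wbar : ℝ → ℝ) (hv0 : vbar 0 = v0) (hw0 : wbar 0 = w0)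
    (hvbar : ∀ t : ℝ, HasDerivAt vbar (η * vbar t - wbar t) t)
    (hwbar : ∀ t : ℝ, HasDerivAt wbar (ε * (α * vbar t - σ * wbar t - lam)) t)
    (Θ : ℝ → Matrix (Fin 2) (Fin 2) ℝ)
    (hΘ : ∀ (t : ℝ) (i j : Fin 2), Θ t i j =
      D ^ 2 * ∫ s in (0:ℝ)..t,
        ((NormedSpace.exp (s • A)).mulVec ![0, 1]) i *
        ((NormedSpace.exp (s • A)).mulVec ![0, 1]) j)
    (hpos : ∀ t : ℝ, 0 < t → (Θ t).PosDef)
    (p : ℝ → ℝ → ℝ → ℝ)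
    (hp : ∀ t v w : ℝ, p t v w =
      (2 * Real.pi * Real.sqrt (Θ t).det)⁻¹ *
        Real.exp (-(1 / 2) *
          (![v - vbar t, w - wbar t] ⬝ᵥ ((Θ t)⁻¹ *ᵥ ![v - vbar t, w - wbar t])))) :
    ∀ t : ℝ, 0 < t → ∀ v w : ℝ,
      deriv (fun τ => p τ v w) t =
        -(deriv (fun x => (η * x - w) * p t x w) v)
        - deriv (fun y => ε * (α * v - σ * y - lam) * p t v y
            - D ^ 2 / 2 * deriv (fun y' => p t v y') y) w := by
  intro t ht v w
  -- entrywise form of Θ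
  have hmv : ∀ (s : ℝ) (i : Fin 2),
      ((NormedSpace.exp (s • A)).mulVec ![0, 1]) i = NormedSpace.exp (s • A) i 1 := by
    intro s i
    simp [Matrix.mulVec, dotProduct, Fin.sum_univ_two]
  have hΘ' : ∀ (τ : ℝ) (i j : Fin 2), Θ τ i j =
      D ^ 2 * ∫ s in (0:ℝ)..τ,
        NormedSpace.exp (s • A) i 1 * NormedSpace.exp (s • A) j 1 := by
    intro τ i j
    rw [hΘ]
    congr 1
    apply intervalIntegral.integral_congr
    intro s _
    simp only [hmv]
  -- entry derivatives of the exponential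
  have hu : ∀ (i : Fin 2) (s : ℝ),
      HasDerivAt (fun s : ℝ => NormedSpace.exp (s • A) i 1)
        (A i 0 * NormedSpace.exp (s • A) 0 1 + A i 1 * NormedSpace.exp (s • A) 1 1) s := by
    intro i s
    simpa [Matrix.mul_apply, Fin.sum_univ_two] using fp_entry_deriv A i 1 s
  have hA00 : A 0 0 = η := by rw [hA]; simp
  have hA01 : A 0 1 = -1 := by rw [hA]; simp
  have hA10 : A 1 0 = ε * α := by rw [hA]; simp
  have hA11 : A 1 1 = -(ε * σ) := by rw [hA]; simp
  have hu0 : ∀ s : ℝ, HasDerivAt (fun s : ℝ => NormedSpace.exp (s • A) 0 1)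
      (η * NormedSpace.exp (s • A) 0 1 - NormedSpace.exp (s • A) 1 1) s := by
    intro s
    have h := hu 0 s
    rw [hA00, hA01] at h
    convert h using 1; ring
  have hu1 : ∀ s : ℝ, HasDerivAt (fun s : ℝ => NormedSpace.exp (s • A) 1 1)
      (ε * α * NormedSpace.exp (s • A) 0 1 - ε * σ * NormedSpace.exp (s • A) 1 1) s := by
    intro s
    have h := hu 1 s
    rw [hA10, hA11] at h
    convert h using 1; ring
  have hcont : ∀ i : Fin 2, Continuous (fun s : ℝ => NormedSpace.exp (s • A) i 1) := by
    intro i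
    exact Differentiable.continuous fun s => ((hu i s).differentiableAt)
  -- value at 0
  have hzero : NormedSpace.exp ((0:ℝ) • A) = 1 := by
    rw [zero_smul, NormedSpace.exp_zero]
  have h00 : NormedSpace.exp ((0:ℝ) • A) 0 1 = 0 := by
    rw [hzero]; simp [Matrix.one_apply]
  have h11 : NormedSpace.exp ((0:ℝ) • A) 1 1 = 1 := by
    rw [hzero]; simp [Matrix.one_apply]
  -- FTC: derivative of Θ entries
  have hΘd : ∀ i j : Fin 2, HasDerivAt (fun τ => Θ τ i j)
      (D ^ 2 * (NormedSpace.exp (t • A) i 1 * NormedSpace.exp (t • A) j 1)) t := by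
    intro i j
    have hfc : Continuous (fun s : ℝ =>
        NormedSpace.exp (s • A) i 1 * NormedSpace.exp (s • A) j 1) :=
      (hcont i).mul (hcont j)
    have h := ((hfc.integral_hasStrictDerivAt 0 t).hasDerivAt).const_mul (D ^ 2)
    have heq : (fun τ => Θ τ i j) = fun τ => D ^ 2 * ∫ s in (0:ℝ)..τ,
        NormedSpace.exp (s • A) i 1 * NormedSpace.exp (s • A) j 1 :=
      funext fun τ => hΘ' τ i j
    rw [heq]
    exact h

  have hc00 : Continuous (fun s : ℝ => NormedSpace.exp (s • A) 0 1 * NormedSpace.exp (s • A) 0 1) := (hcont 0).mul (hcont 0)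
  have hc01 : Continuous (fun s : ℝ => NormedSpace.exp (s • A) 0 1 * NormedSpace.exp (s • A) 1 1) := (hcont 0).mul (hcont 1)
  have hc11 : Continuous (fun s : ℝ => NormedSpace.exp (s • A) 1 1 * NormedSpace.exp (s • A) 1 1) := (hcont 1).mul (hcont 1)
  have relA : D ^ 2 * (NormedSpace.exp ((t : ℝ) • A) 0 1 * NormedSpace.exp ((t : ℝ) • A) 0 1)
      = 2 * (η * Θ t 0 0 - Θ t 0 1) := by
    have hder : ∀ s ∈ Set.uIcc (0:ℝ) t, HasDerivAt
        (fun s : ℝ => NormedSpace.exp (s • A) 0 1 * NormedSpace.exp (s • A) 0 1)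
        (2 * η * (NormedSpace.exp (s • A) 0 1 * NormedSpace.exp (s • A) 0 1) - 2 * (NormedSpace.exp (s • A) 0 1 * NormedSpace.exp (s • A) 1 1)) s := by
      intro s _
      have h := (hu0 s).mul (hu0 s)
      exact h.congr_deriv (by ring)
    have hintc : Continuous (fun s : ℝ =>
        2 * η * (NormedSpace.exp (s • A) 0 1 * NormedSpace.exp (s • A) 0 1) - 2 * (NormedSpace.exp (s • A) 0 1 * NormedSpace.exp (s • A) 1 1)) :=
      (continuous_const.mul hc00).sub (continuous_const.mul hc01)
    have h1 := intervalIntegral.integral_eq_sub_of_hasDerivAt hder (hintc.intervalIntegrable 0 t)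
    have h2 : (∫ s in (0:ℝ)..t, (2 * η * (NormedSpace.exp (s • A) 0 1 * NormedSpace.exp (s • A) 0 1) - 2 * (NormedSpace.exp (s • A) 0 1 * NormedSpace.exp (s • A) 1 1)))
        = 2 * η * (∫ s in (0:ℝ)..t, NormedSpace.exp (s • A) 0 1 * NormedSpace.exp (s • A) 0 1)
          - 2 * ∫ s in (0:ℝ)..t, NormedSpace.exp (s • A) 0 1 * NormedSpace.exp (s • A) 1 1 := by
      rw [intervalIntegral.integral_sub (f := fun s => 2 * η * (NormedSpace.exp (s • A) 0 1 * NormedSpace.exp (s • A) 0 1)) (g := fun s => 2 * (NormedSpace.exp (s • A) 0 1 * NormedSpace.exp (s • A) 1 1)) (((continuous_const.mul hc00)).intervalIntegrable 0 t)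
        ((continuous_const.mul hc01).intervalIntegrable 0 t),
        intervalIntegral.integral_const_mul, intervalIntegral.integral_const_mul]
    rw [h2] at h1
    calc D ^ 2 * (NormedSpace.exp ((t : ℝ) • A) 0 1 * NormedSpace.exp ((t : ℝ) • A) 0 1)
        = D ^ 2 * (2 * η * (∫ s in (0:ℝ)..t, NormedSpace.exp (s • A) 0 1 * NormedSpace.exp (s • A) 0 1)
          - 2 * ∫ s in (0:ℝ)..t, NormedSpace.exp (s • A) 0 1 * NormedSpace.exp (s • A) 1 1) := by rw [h1, h00]; ring
      _ = 2 * (η * (D ^ 2 * ∫ s in (0:ℝ)..t, NormedSpace.exp (s • A) 0 1 * NormedSpace.exp (s • A) 0 1)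
          - D ^ 2 * ∫ s in (0:ℝ)..t, NormedSpace.exp (s • A) 0 1 * NormedSpace.exp (s • A) 1 1) := by ring
      _ = 2 * (η * Θ t 0 0 - Θ t 0 1) := by rw [← hΘ' t 0 0, ← hΘ' t 0 1]
  have relB : D ^ 2 * (NormedSpace.exp ((t : ℝ) • A) 0 1 * NormedSpace.exp ((t : ℝ) • A) 1 1)
      = ε * α * Θ t 0 0 + (η - ε * σ) * Θ t 0 1 - Θ t 1 1 := by
    have hder : ∀ s ∈ Set.uIcc (0:ℝ) t, HasDerivAt
        (fun s : ℝ => NormedSpace.exp (s • A) 0 1 * NormedSpace.exp (s • A) 1 1)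
        (ε * α * (NormedSpace.exp (s • A) 0 1 * NormedSpace.exp (s • A) 0 1) + (η - ε * σ) * (NormedSpace.exp (s • A) 0 1 * NormedSpace.exp (s • A) 1 1)
          - (NormedSpace.exp (s • A) 1 1 * NormedSpace.exp (s • A) 1 1)) s := by
      intro s _
      have h := (hu0 s).mul (hu1 s)
      exact h.congr_deriv (by ring)
    have hintc : Continuous (fun s : ℝ =>
        ε * α * (NormedSpace.exp (s • A) 0 1 * NormedSpace.exp (s • A) 0 1) + (η - ε * σ) * (NormedSpace.exp (s • A) 0 1 * NormedSpace.exp (s • A) 1 1)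
          - (NormedSpace.exp (s • A) 1 1 * NormedSpace.exp (s • A) 1 1)) :=
      (((continuous_const.mul hc00)).add ((continuous_const.mul hc01))).sub hc11
    have h1 := intervalIntegral.integral_eq_sub_of_hasDerivAt hder (hintc.intervalIntegrable 0 t)
    have h2 : (∫ s in (0:ℝ)..t, (ε * α * (NormedSpace.exp (s • A) 0 1 * NormedSpace.exp (s • A) 0 1)
          + (η - ε * σ) * (NormedSpace.exp (s • A) 0 1 * NormedSpace.exp (s • A) 1 1) - (NormedSpace.exp (s • A) 1 1 * NormedSpace.exp (s • A) 1 1)))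
        = ε * α * (∫ s in (0:ℝ)..t, NormedSpace.exp (s • A) 0 1 * NormedSpace.exp (s • A) 0 1)
          + (η - ε * σ) * (∫ s in (0:ℝ)..t, NormedSpace.exp (s • A) 0 1 * NormedSpace.exp (s • A) 1 1)
          - ∫ s in (0:ℝ)..t, NormedSpace.exp (s • A) 1 1 * NormedSpace.exp (s • A) 1 1 := by
      rw [intervalIntegral.integral_sub (f := fun s => ε * α * (NormedSpace.exp (s • A) 0 1 * NormedSpace.exp (s • A) 0 1) + (η - ε * σ) * (NormedSpace.exp (s • A) 0 1 * NormedSpace.exp (s • A) 1 1)) (g := fun s => NormedSpace.exp (s • A) 1 1 * NormedSpace.exp (s • A) 1 1) ((((continuous_const.mul hc00)).add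
          ((continuous_const.mul hc01))).intervalIntegrable 0 t) (hc11.intervalIntegrable 0 t),
        intervalIntegral.integral_add (f := fun s => ε * α * (NormedSpace.exp (s • A) 0 1 * NormedSpace.exp (s • A) 0 1)) (g := fun s => (η - ε * σ) * (NormedSpace.exp (s • A) 0 1 * NormedSpace.exp (s • A) 1 1)) (((continuous_const.mul hc00)).intervalIntegrable 0 t)
          (((continuous_const.mul hc01)).intervalIntegrable 0 t),
        intervalIntegral.integral_const_mul, intervalIntegral.integral_const_mul]
    rw [h2] at h1
    calc D ^ 2 * (NormedSpace.exp ((t : ℝ) • A) 0 1 * NormedSpace.exp ((t : ℝ) • A) 1 1)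
        = D ^ 2 * (ε * α * (∫ s in (0:ℝ)..t, NormedSpace.exp (s • A) 0 1 * NormedSpace.exp (s • A) 0 1)
          + (η - ε * σ) * (∫ s in (0:ℝ)..t, NormedSpace.exp (s • A) 0 1 * NormedSpace.exp (s • A) 1 1)
          - ∫ s in (0:ℝ)..t, NormedSpace.exp (s • A) 1 1 * NormedSpace.exp (s • A) 1 1) := by rw [h1, h00]; ring
      _ = ε * α * (D ^ 2 * ∫ s in (0:ℝ)..t, NormedSpace.exp (s • A) 0 1 * NormedSpace.exp (s • A) 0 1)
          + (η - ε * σ) * (D ^ 2 * ∫ s in (0:ℝ)..t, NormedSpace.exp (s • A) 0 1 * NormedSpace.exp (s • A) 1 1)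
          - D ^ 2 * ∫ s in (0:ℝ)..t, NormedSpace.exp (s • A) 1 1 * NormedSpace.exp (s • A) 1 1 := by ring
      _ = ε * α * Θ t 0 0 + (η - ε * σ) * Θ t 0 1 - Θ t 1 1 := by
          rw [← hΘ' t 0 0, ← hΘ' t 0 1, ← hΘ' t 1 1]
  have relC : D ^ 2 * (NormedSpace.exp ((t : ℝ) • A) 1 1 * NormedSpace.exp ((t : ℝ) • A) 1 1)
      = 2 * ε * (α * Θ t 0 1 - σ * Θ t 1 1) + D ^ 2 := by
    have hder : ∀ s ∈ Set.uIcc (0:ℝ) t, HasDerivAt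
        (fun s : ℝ => NormedSpace.exp (s • A) 1 1 * NormedSpace.exp (s • A) 1 1)
        (2 * ε * α * (NormedSpace.exp (s • A) 0 1 * NormedSpace.exp (s • A) 1 1) - 2 * ε * σ * (NormedSpace.exp (s • A) 1 1 * NormedSpace.exp (s • A) 1 1)) s := by
      intro s _
      have h := (hu1 s).mul (hu1 s)
      exact h.congr_deriv (by ring)
    have hintc : Continuous (fun s : ℝ =>
        2 * ε * α * (NormedSpace.exp (s • A) 0 1 * NormedSpace.exp (s • A) 1 1) - 2 * ε * σ * (NormedSpace.exp (s • A) 1 1 * NormedSpace.exp (s • A) 1 1)) :=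
      ((continuous_const.mul hc01)).sub ((continuous_const.mul hc11))
    have h1 := intervalIntegral.integral_eq_sub_of_hasDerivAt hder (hintc.intervalIntegrable 0 t)
    have h2 : (∫ s in (0:ℝ)..t, (2 * ε * α * (NormedSpace.exp (s • A) 0 1 * NormedSpace.exp (s • A) 1 1)
          - 2 * ε * σ * (NormedSpace.exp (s • A) 1 1 * NormedSpace.exp (s • A) 1 1)))
        = 2 * ε * α * (∫ s in (0:ℝ)..t, NormedSpace.exp (s • A) 0 1 * NormedSpace.exp (s • A) 1 1)
          - 2 * ε * σ * ∫ s in (0:ℝ)..t, NormedSpace.exp (s • A) 1 1 * NormedSpace.exp (s • A) 1 1 := by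
      rw [intervalIntegral.integral_sub (f := fun s => 2 * ε * α * (NormedSpace.exp (s • A) 0 1 * NormedSpace.exp (s • A) 1 1)) (g := fun s => 2 * ε * σ * (NormedSpace.exp (s • A) 1 1 * NormedSpace.exp (s • A) 1 1)) (((continuous_const.mul hc01)).intervalIntegrable 0 t)
        (((continuous_const.mul hc11)).intervalIntegrable 0 t),
        intervalIntegral.integral_const_mul, intervalIntegral.integral_const_mul]
    rw [h2] at h1
    calc D ^ 2 * (NormedSpace.exp ((t : ℝ) • A) 1 1 * NormedSpace.exp ((t : ℝ) • A) 1 1)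
        = D ^ 2 * (2 * ε * α * (∫ s in (0:ℝ)..t, NormedSpace.exp (s • A) 0 1 * NormedSpace.exp (s • A) 1 1)
          - 2 * ε * σ * (∫ s in (0:ℝ)..t, NormedSpace.exp (s • A) 1 1 * NormedSpace.exp (s • A) 1 1) + 1) := by rw [h1, h11]; ring
      _ = 2 * ε * (α * (D ^ 2 * ∫ s in (0:ℝ)..t, NormedSpace.exp (s • A) 0 1 * NormedSpace.exp (s • A) 1 1)
          - σ * (D ^ 2 * ∫ s in (0:ℝ)..t, NormedSpace.exp (s • A) 1 1 * NormedSpace.exp (s • A) 1 1)) + D ^ 2 := by ring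
      _ = 2 * ε * (α * Θ t 0 1 - σ * Θ t 1 1) + D ^ 2 := by
          rw [← hΘ' t 0 1, ← hΘ' t 1 1]
  -- symmetry, determinant, quadratic form
  have hsym : ∀ τ : ℝ, Θ τ 1 0 = Θ τ 0 1 := by
    intro τ
    rw [hΘ', hΘ']
    congr 1
    apply intervalIntegral.integral_congr
    intro s _
    exact mul_comm _ _
  have hdet : ∀ τ : ℝ, (Θ τ).det = Θ τ 0 0 * Θ τ 1 1 - Θ τ 0 1 ^ 2 := by
    intro τ
    rw [Matrix.det_fin_two, hsym τ]
    ring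
  have hq : ∀ (τ x y : ℝ), ![x, y] ⬝ᵥ ((Θ τ)⁻¹ *ᵥ ![x, y])
      = (Θ τ 0 0 * Θ τ 1 1 - Θ τ 0 1 ^ 2)⁻¹ *
        (Θ τ 1 1 * x ^ 2 - 2 * Θ τ 0 1 * x * y + Θ τ 0 0 * y ^ 2) := by
    intro τ x y
    rw [Matrix.inv_def]
    have e1 : (Θ τ).det = Θ τ 0 0 * Θ τ 1 1 - Θ τ 0 1 ^ 2 := hdet τ
    simp only [Matrix.adjugate_fin_two, e1, Ring.inverse_eq_inv', Matrix.smul_mulVec,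
      Matrix.mulVec, dotProduct, Fin.sum_univ_two, Pi.smul_apply, smul_eq_mul,
      Matrix.cons_val', Matrix.cons_val_zero, Matrix.cons_val_one, Matrix.head_cons,
      Matrix.empty_val', Matrix.cons_val_fin_one, Matrix.head_fin_const, Matrix.of_apply,
      Matrix.cons_val_fin_one]
    rw [hsym τ]
    simp only [Matrix.smul_apply, smul_eq_mul, Matrix.cons_val', Matrix.cons_val_zero,
      Matrix.cons_val_one, Matrix.head_cons, Matrix.empty_val', Matrix.cons_val_fin_one,
      Matrix.head_fin_const, Matrix.of_apply]
    ring
  have hdetpos : 0 < Θ t 0 0 * Θ t 1 1 - Θ t 0 1 ^ 2 := by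
    have h := (hpos t ht).det_pos
    rwa [hdet t] at h
  -- derivative hypotheses
  have haF : HasDerivAt (fun τ => Θ τ 0 0) (2 * (η * Θ t 0 0 - Θ t 0 1)) t := relA ▸ hΘd 0 0
  have hbF : HasDerivAt (fun τ => Θ τ 0 1)
      (ε * α * Θ t 0 0 + (η - ε * σ) * Θ t 0 1 - Θ t 1 1) t := relB ▸ hΘd 0 1
  have hcF : HasDerivAt (fun τ => Θ τ 1 1)
      (2 * ε * (α * Θ t 0 1 - σ * Θ t 1 1) + D ^ 2) t := relC ▸ hΘd 1 1
  simp only [hp, hdet, hq]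
  exact fp_core η ε α σ lam D (fun τ => Θ τ 0 0) (fun τ => Θ τ 0 1) (fun τ => Θ τ 1 1)
    vbar wbar t _ _ _ _ _ haF hbF hcF (hvbar t) (hwbar t) rfl rfl rfl rfl rfl hdetpos v w
end

section
/- For all real c > 0, D > 0 and z ∈ ℝ, the improper integral converges and (c/√(2πD²)) ∫₀^∞ t^{-1/2} exp(-(z - ct)²/(2D²t)) dt = exp((z - |z|)c/D²). In particular the value is 1 when z ≥ 0 and exp(2cz/D²) when z < 0. -/
open MeasureTheory

open Real Set Filter

private lemma sqrt_tendsto_atTop : Tendsto Real.sqrt atTop atTop := by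
  have := tendsto_rpow_atTop (y := 1/2) (by norm_num)
  refine this.congr' ?_
  filter_upwards [eventually_ge_atTop (0:ℝ)] with x hx
  rw [Real.sqrt_eq_rpow]

private lemma contInner {a b : ℝ} : ContinuousOn (fun t : ℝ => -a/t - b*t) (Ioi 0) := by
  apply ContinuousOn.sub
  · exact continuousOn_const.div continuousOn_id fun t ht => (mem_Ioi.1 ht).ne'
  · exact (continuous_const.mul continuous_id).continuousOn

private lemma contF {a b : ℝ} :
    ContinuousOn (fun t : ℝ => (Real.sqrt t)⁻¹ * Real.exp (-a/t - b*t)) (Ioi 0) := by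
  apply ContinuousOn.mul
  · exact (Real.continuous_sqrt.continuousOn).inv₀ fun t ht =>
      (Real.sqrt_ne_zero'.2 (mem_Ioi.1 ht))
  · exact Real.continuous_exp.comp_continuousOn contInner

private lemma hFaux {a b : ℝ} (ha : 0 ≤ a) (hb : 0 < b) :
    IntegrableOn (fun t : ℝ => (Real.sqrt t)⁻¹ * Real.exp (-a/t - b*t)) (Ioi 0) := by
  have hmaj : IntegrableOn (fun t : ℝ => t ^ (-(1:ℝ)/2) * Real.exp (-b * t ^ (1:ℝ))) (Ioi 0) :=
    integrableOn_rpow_mul_exp_neg_mul_rpow (by norm_num) zero_lt_one hb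
  refine Integrable.mono hmaj (contF.aestronglyMeasurable measurableSet_Ioi) ?_
  filter_upwards [ae_restrict_mem measurableSet_Ioi] with t ht
  have ht0 : (0:ℝ) < t := ht
  have h1 : (Real.sqrt t)⁻¹ = t ^ (-(1:ℝ)/2) := by
    rw [show (-(1:ℝ)/2) = -(1/2) by ring, Real.rpow_neg ht0.le, ← Real.sqrt_eq_rpow]
  rw [Real.norm_eq_abs, Real.norm_eq_abs, abs_of_nonneg (by positivity),
    abs_of_nonneg (by positivity), h1, Real.rpow_one]
  apply mul_le_mul_of_nonneg_left _ (le_of_lt (by positivity))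
  apply Real.exp_le_exp.2
  have h2 : 0 ≤ a / t := by positivity
  have h3 : -a/t = -(a/t) := neg_div t a
  linarith

private lemma contG {a b : ℝ} :
    ContinuousOn (fun t : ℝ =>
      Real.sqrt (a/b) * ((t * Real.sqrt t)⁻¹ * Real.exp (-a/t - b*t))) (Ioi 0) := by
  apply ContinuousOn.mul continuousOn_const
  apply ContinuousOn.mul
  · apply ContinuousOn.inv₀ (continuousOn_id.mul Real.continuous_sqrt.continuousOn)
    intro t ht
    have : (0:ℝ) < t := ht
    exact (mul_pos this (Real.sqrt_pos.2 this)).ne'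
  · exact Real.continuous_exp.comp_continuousOn contInner

private lemma exp_neg_bound {a t : ℝ} (hapos : 0 < a) (ht0 : 0 < t) :
    Real.exp (-(a/t)) ≤ 4*t^2/a^2 := by
  have h2 : a/(2*t) ≤ Real.exp (a/(2*t)) := by
    have := Real.add_one_le_exp (a/(2*t)); linarith
  have h3 : a^2/(4*t^2) ≤ Real.exp (a/t) :=
    calc a^2/(4*t^2) = (a/(2*t))^2 := by ring
      _ ≤ (Real.exp (a/(2*t)))^2 := by apply pow_le_pow_left₀ (by positivity) h2
      _ = Real.exp (a/t) := by
          rw [sq, ← Real.exp_add]; congr 1; field_simp; ring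
  rw [Real.exp_neg, inv_le_comm₀ (Real.exp_pos _) (by positivity), inv_div]
  exact h3

private lemma hGaux {a b : ℝ} (ha : 0 ≤ a) (hb : 0 < b) :
    IntegrableOn (fun t : ℝ =>
      Real.sqrt (a/b) * ((t * Real.sqrt t)⁻¹ * Real.exp (-a/t - b*t))) (Ioi 0) := by
  rcases eq_or_lt_of_le ha with h0 | hapos
  · simp only [← h0, zero_div, Real.sqrt_zero, zero_mul]
    exact integrableOn_zero
  · have hmaj : IntegrableOn (fun t : ℝ =>
        (Real.sqrt (a/b) * (4/a^2)) * (t ^ ((1:ℝ)/2) * Real.exp (-b * t ^ (1:ℝ)))) (Ioi 0) :=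
      (integrableOn_rpow_mul_exp_neg_mul_rpow (by norm_num) zero_lt_one hb).const_mul _
    refine Integrable.mono hmaj (contG.aestronglyMeasurable measurableSet_Ioi) ?_
    filter_upwards [ae_restrict_mem measurableSet_Ioi] with t ht
    have ht0 : (0:ℝ) < t := ht
    have hsq : Real.sqrt t * Real.sqrt t = t := Real.mul_self_sqrt ht0.le
    have hsqpos : 0 < Real.sqrt t := Real.sqrt_pos.2 ht0
    have h1 : t ^ ((1:ℝ)/2) = Real.sqrt t := (Real.sqrt_eq_rpow t).symm
    rw [Real.norm_eq_abs, Real.norm_eq_abs, abs_of_nonneg (by positivity),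
      abs_of_nonneg (by positivity), h1, Real.rpow_one, mul_assoc]
    apply mul_le_mul_of_nonneg_left _ (Real.sqrt_nonneg _)
    have hsplit : Real.exp (-a/t - b*t) = Real.exp (-(a/t)) * Real.exp (-(b*t)) := by
      rw [← Real.exp_add]; congr 1; rw [neg_div]; ring
    rw [hsplit]
    have hkey : (t * Real.sqrt t)⁻¹ * (Real.exp (-(a/t)) * Real.exp (-(b*t)))
        ≤ (t * Real.sqrt t)⁻¹ * ((4*t^2/a^2) * Real.exp (-(b*t))) := by
      apply mul_le_mul_of_nonneg_left _ (by positivity)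
      exact mul_le_mul_of_nonneg_right (exp_neg_bound hapos ht0) (Real.exp_pos _).le
    refine hkey.trans (le_of_eq ?_)
    have h9 : (t * Real.sqrt t)⁻¹ * (4*t^2/a^2) = 4/a^2 * Real.sqrt t := by
      field_simp
      linear_combination (-1)*hsq
    rw [← mul_assoc, h9, mul_assoc, neg_mul]

private lemma inv_aux {a b : ℝ} (hapos : 0 < a) (hb : 0 < b) :
    ∫ t in Ioc (0:ℝ) (Real.sqrt (a/b)), (Real.sqrt t)⁻¹ * Real.exp (-a/t - b*t)
      = ∫ t in Ioi (Real.sqrt (a/b)),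
          Real.sqrt (a/b) * ((t * Real.sqrt t)⁻¹ * Real.exp (-a/t - b*t)) := by
  set k := a/b with hk_def
  have hk : 0 < k := div_pos hapos hb
  set t₀ := Real.sqrt k with ht₀_def
  have ht₀ : 0 < t₀ := Real.sqrt_pos.2 hk
  have ht₀sq : t₀ * t₀ = k := Real.mul_self_sqrt hk.le
  set F : ℝ → ℝ := fun t => (Real.sqrt t)⁻¹ * Real.exp (-a/t - b*t) with hF_def
  set G : ℝ → ℝ := fun t => t₀ * ((t * Real.sqrt t)⁻¹ * Real.exp (-a/t - b*t)) with hG_def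
  set h : ℝ → ℝ := (Ioc (0:ℝ) t₀).indicator F with hh_def
  have step0 : ∫ t in Ioc (0:ℝ) t₀, F t = ∫ t in Ioi (0:ℝ), h t := by
    rw [hh_def, setIntegral_indicator measurableSet_Ioc,
      inter_eq_self_of_subset_right Ioc_subset_Ioi_self]
  have step1 : ∫ t in Ioi (0:ℝ), h t = k * ∫ x in Ioi (0:ℝ), h (k * x) := by
    rw [integral_comp_mul_left_Ioi h 0 hk, mul_zero, smul_eq_mul, ← mul_assoc,
      mul_inv_cancel₀ hk.ne', one_mul]
  have step2 : ∫ x in Ioi (0:ℝ), h (k * x)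
      = ∫ x in Ioi (0:ℝ), (x^2)⁻¹ * h (k * x⁻¹) := by
    rw [← integral_comp_rpow_Ioi (fun x => h (k * x)) (p := -1) (by norm_num)]
    refine setIntegral_congr_fun measurableSet_Ioi fun x hx => ?_
    have hx0 : (0:ℝ) < x := hx
    have h1 : x ^ (-1:ℝ) = x⁻¹ := by
      rw [Real.rpow_neg hx0.le, Real.rpow_one]
    have h2 : x ^ ((-1:ℝ) - 1) = (x^2)⁻¹ := by
      rw [show ((-1:ℝ)-1) = -(2:ℝ) by norm_num, Real.rpow_neg hx0.le,
        show ((2:ℝ):ℝ) = ((2:ℕ):ℝ) by norm_num, Real.rpow_natCast]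
    rw [h1, h2]
    simp [smul_eq_mul]
  have step3 : ∀ x ∈ Ioi (0:ℝ),
      k * ((x^2)⁻¹ * h (k * x⁻¹)) = (Ici t₀).indicator G x := by
    intro x hx
    have hx0 : (0:ℝ) < x := hx
    have hsq : Real.sqrt x * Real.sqrt x = x := Real.mul_self_sqrt hx0.le
    have hsqpos : 0 < Real.sqrt x := Real.sqrt_pos.2 hx0
    by_cases hmem : t₀ ≤ x
    · have hmem' : k * x⁻¹ ∈ Ioc (0:ℝ) t₀ := by
        constructor
        · positivity
        · rw [mul_inv_le_iff₀ hx0]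
          nlinarith [ht₀sq]
      have e1 : -a/(k*x⁻¹) - b*(k*x⁻¹) = -a/x - b*x := by
        rw [hk_def]; field_simp; ring
      have e2 : Real.sqrt (k * x⁻¹) = t₀ / Real.sqrt x := by
        rw [Real.sqrt_mul hk.le, Real.sqrt_inv, ← div_eq_mul_inv, ht₀_def]
      rw [hh_def, indicator_of_mem hmem', indicator_of_mem (mem_Ici.2 hmem), hF_def, hG_def]
      simp only []
      rw [e1, e2]
      have e3 : k * ((x^2)⁻¹ * (t₀/Real.sqrt x)⁻¹) = t₀ * (x * Real.sqrt x)⁻¹ := by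
        field_simp
        linear_combination (a/b)*hsq - x*ht₀sq - x*hk_def
      calc k * ((x^2)⁻¹ * ((t₀/Real.sqrt x)⁻¹ * Real.exp (-a/x - b*x)))
          = (k * ((x^2)⁻¹ * (t₀/Real.sqrt x)⁻¹)) * Real.exp (-a/x - b*x) := by ring
        _ = (t₀ * (x * Real.sqrt x)⁻¹) * Real.exp (-a/x - b*x) := by rw [e3]
        _ = t₀ * ((x * Real.sqrt x)⁻¹ * Real.exp (-a/x - b*x)) := by ring
    · have hmem' : k * x⁻¹ ∉ Ioc (0:ℝ) t₀ := by
        intro hc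
        apply hmem
        rcases hc with ⟨hc1, hc2⟩
        rw [mul_inv_le_iff₀ hx0] at hc2
        nlinarith [ht₀sq]
      rw [hh_def, indicator_of_notMem hmem', indicator_of_notMem (by simpa using hmem)]
      ring
  calc ∫ t in Ioc (0:ℝ) t₀, F t
      = ∫ t in Ioi (0:ℝ), h t := step0
    _ = k * ∫ x in Ioi (0:ℝ), h (k * x) := step1
    _ = k * ∫ x in Ioi (0:ℝ), (x^2)⁻¹ * h (k * x⁻¹) := by rw [step2]
    _ = ∫ x in Ioi (0:ℝ), k * ((x^2)⁻¹ * h (k * x⁻¹)) := by rw [integral_const_mul]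
    _ = ∫ x in Ioi (0:ℝ), (Ici t₀).indicator G x := setIntegral_congr_fun measurableSet_Ioi step3
    _ = ∫ x in Ioi (0:ℝ) ∩ Ici t₀, G x := setIntegral_indicator measurableSet_Ici
    _ = ∫ x in Ici t₀, G x := by
        rw [inter_eq_self_of_subset_right (Ici_subset_Ioi.mpr ht₀)]
    _ = ∫ x in Ioi t₀, G x := integral_Ici_eq_integral_Ioi


-- pointwise identity
private lemma pt_aux {a b x : ℝ} (ha : 0 ≤ a) (hb : 0 < b) (hx : 0 < x) :
    Real.exp (-(Real.sqrt b * Real.sqrt x - Real.sqrt a * (Real.sqrt x)⁻¹)^2)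
      * (Real.sqrt b / (2*Real.sqrt x) + Real.sqrt a / (2*(x*Real.sqrt x)))
    = (Real.sqrt b / 2) * Real.exp (2 * Real.sqrt (a*b)) *
        ((Real.sqrt x)⁻¹ * Real.exp (-a/x - b*x)
          + Real.sqrt (a/b) * ((x * Real.sqrt x)⁻¹ * Real.exp (-a/x - b*x))) := by
  set A := Real.sqrt a with hA_def
  set B := Real.sqrt b with hB_def
  set s := Real.sqrt x with hs_def
  have hA2 : A * A = a := Real.mul_self_sqrt ha
  have hB2 : B * B = b := Real.mul_self_sqrt hb.le
  have hs2 : s * s = x := Real.mul_self_sqrt hx.le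
  have hBpos : 0 < B := Real.sqrt_pos.2 hb
  have hspos : 0 < s := Real.sqrt_pos.2 hx
  have e1 : Real.sqrt (a/b) = A/B := Real.sqrt_div ha b
  have e2 : Real.sqrt (a*b) = A*B := Real.sqrt_mul ha b
  have hexp : Real.exp (-(B*s - A*s⁻¹)^2)
      = Real.exp (-a/x - b*x) * Real.exp (2*(A*B)) := by
    rw [← Real.exp_add]
    congr 1
    rw [← hA2, ← hB2, ← hs2]
    field_simp
    ring
  rw [e1, e2, hexp]
  have E := Real.exp (-a/x - b*x)
  field_simp


private lemma subst_aux {a b : ℝ} (ha : 0 ≤ a) (hb : 0 < b) :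
    ∫ t in Ioi (Real.sqrt (a/b)),
        ((Real.sqrt t)⁻¹ * Real.exp (-a/t - b*t)
          + Real.sqrt (a/b) * ((t * Real.sqrt t)⁻¹ * Real.exp (-a/t - b*t)))
      = Real.sqrt π / Real.sqrt b * Real.exp (-(2 * Real.sqrt (a*b))) := by
  set A := Real.sqrt a with hA_def
  set B := Real.sqrt b with hB_def
  have hA2 : A * A = a := Real.mul_self_sqrt ha
  have hB2 : B * B = b := Real.mul_self_sqrt hb.le
  have hBpos : 0 < B := Real.sqrt_pos.2 hb
  have hAnn : 0 ≤ A := Real.sqrt_nonneg a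
  set t₀ := Real.sqrt (a/b) with ht₀_def
  have ht₀0 : 0 ≤ t₀ := Real.sqrt_nonneg _
  have ht₀AB : t₀ = A/B := Real.sqrt_div ha b
  set φ : ℝ → ℝ := fun t => B * Real.sqrt t - A * (Real.sqrt t)⁻¹ with hφ_def
  set φ' : ℝ → ℝ := fun t => B / (2*Real.sqrt t) + A / (2*(t*Real.sqrt t)) with hφ'_def
  set g : ℝ → ℝ := fun u => Real.exp (-u^2) with hg_def
  have hgint : Integrable g := by
    have h := integrable_exp_neg_mul_sq (b := 1) one_pos
    simpa [hg_def] using h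
  have hgauss : ∫ u in Ioi (0:ℝ), g u = Real.sqrt π / 2 := by
    have h := integral_gaussian_Ioi 1
    simpa [hg_def] using h
  -- continuity of φ on Ici t₀
  have hcont : ContinuousOn φ (Ici t₀) := by
    rcases eq_or_lt_of_le ha with h0 | hapos
    · have hA0 : A = 0 := by rw [hA_def, ← h0, Real.sqrt_zero]
      have hc2 : ContinuousOn (fun t : ℝ => B * Real.sqrt t) (Ici t₀) :=
        (continuous_const.mul Real.continuous_sqrt).continuousOn
      exact hc2.congr fun t _ => by simp only [hφ_def, hA0, zero_mul, sub_zero]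
    · have ht₀pos : 0 < t₀ := Real.sqrt_pos.2 (div_pos hapos hb)
      apply ContinuousOn.sub ((continuous_const.mul Real.continuous_sqrt).continuousOn)
      exact continuousOn_const.mul (Real.continuous_sqrt.continuousOn.inv₀ fun t ht =>
        Real.sqrt_ne_zero'.2 (lt_of_lt_of_le ht₀pos ht))
  -- φ t₀ = 0
  have hφt₀ : φ t₀ = 0 := by
    rcases eq_or_lt_of_le ha with h0 | hapos
    · have hA0 : A = 0 := by rw [hA_def, ← h0, Real.sqrt_zero]
      have ht0 : t₀ = 0 := by rw [ht₀_def, ← h0, zero_div, Real.sqrt_zero]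
      simp only [hφ_def, hA0, zero_mul, sub_zero, ht0, Real.sqrt_zero, mul_zero]
    · have hApos : 0 < A := Real.sqrt_pos.2 hapos
      have hsA : Real.sqrt A * Real.sqrt A = A := Real.mul_self_sqrt hAnn
      have hsB : Real.sqrt B * Real.sqrt B = B := Real.mul_self_sqrt hBpos.le
      have hsApos : 0 < Real.sqrt A := Real.sqrt_pos.2 hApos
      have hsBpos : 0 < Real.sqrt B := Real.sqrt_pos.2 hBpos
      have ht' : Real.sqrt t₀ = Real.sqrt A / Real.sqrt B := by
        rw [ht₀AB, Real.sqrt_div hAnn]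
      simp only [hφ_def]
      rw [ht']
      field_simp
      linear_combination B * hsA - A * hsB
  -- tendsto atTop
  have hten : Tendsto φ atTop atTop := by
    have l1 : Tendsto (fun t : ℝ => B * Real.sqrt t + (-A)) atTop atTop :=
      tendsto_atTop_add_const_right _ (-A) (sqrt_tendsto_atTop.const_mul_atTop hBpos)
    refine tendsto_atTop_mono' atTop ?_ l1
    filter_upwards [eventually_ge_atTop (1:ℝ)] with t ht
    have h1 : (1:ℝ) ≤ Real.sqrt t := by
      rw [show (1:ℝ) = Real.sqrt 1 by simp]
      exact Real.sqrt_le_sqrt ht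
    have h2 : (Real.sqrt t)⁻¹ ≤ 1 := by
      rw [inv_le_one_iff₀]; right; exact h1
    have h3 : A * (Real.sqrt t)⁻¹ ≤ A := by
      calc A * (Real.sqrt t)⁻¹ ≤ A * 1 := mul_le_mul_of_nonneg_left h2 hAnn
        _ = A := mul_one A
    simp only [hφ_def]
    linarith
  -- derivative
  have hderiv : ∀ x ∈ Ioi t₀, HasDerivWithinAt φ (φ' x) (Ioi x) x := by
    intro x hx
    have hx0 : (0:ℝ) < x := lt_of_le_of_lt ht₀0 hx
    have hsqpos : 0 < Real.sqrt x := Real.sqrt_pos.2 hx0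
    have hsq : Real.sqrt x ^ 2 = x := Real.sq_sqrt hx0.le
    have h1 : HasDerivAt Real.sqrt (1/(2*Real.sqrt x)) x := Real.hasDerivAt_sqrt hx0.ne'
    have h2 : HasDerivAt (fun t => (Real.sqrt t)⁻¹)
        (-(1/(2*Real.sqrt x)) / (Real.sqrt x)^2) x := h1.inv hsqpos.ne'
    have h3 := (h1.const_mul B).sub (h2.const_mul A)
    have heq : B * (1/(2*Real.sqrt x)) - A * (-(1/(2*Real.sqrt x)) / (Real.sqrt x)^2)
        = φ' x := by
      simp only [hφ'_def]
      rw [hsq]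
      have : Real.sqrt x * Real.sqrt x = x := Real.mul_self_sqrt hx0.le
      field_simp
      ring
    rw [heq] at h3
    exact h3.hasDerivWithinAt
  -- main substitution
  have hsub : ∫ x in Ioi t₀, (g ∘ φ) x * φ' x = ∫ u in Ioi (φ t₀), g u :=
    integral_comp_mul_deriv_Ioi hcont hten hderiv
      (Real.continuous_exp.comp (continuous_neg.comp (continuous_pow 2))).continuousOn
      hgint.integrableOn
      (by
        rw [integrableOn_Ici_iff_integrableOn_Ioi]
        have base : IntegrableOn (fun t : ℝ => (Real.sqrt t)⁻¹ * Real.exp (-a/t - b*t)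
            + Real.sqrt (a/b) * ((t * Real.sqrt t)⁻¹ * Real.exp (-a/t - b*t))) (Ioi t₀) :=
          MeasureTheory.IntegrableOn.mono_set ((hFaux ha hb).add (hGaux ha hb))
            (Ioi_subset_Ioi ht₀0)
        have base2 := base.const_mul (B/2 * Real.exp (2 * Real.sqrt (a*b)))
        refine MeasureTheory.IntegrableOn.congr_fun base2 (fun x hx => ?_) measurableSet_Ioi
        have hx0 : (0:ℝ) < x := lt_of_le_of_lt ht₀0 hx
        have := pt_aux ha hb hx0
        simp only [hφ_def, hφ'_def, hg_def, Function.comp_apply]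
        calc (B/2 * Real.exp (2*Real.sqrt (a*b))) *
              ((Real.sqrt x)⁻¹ * Real.exp (-a/x - b*x)
               + Real.sqrt (a/b) * ((x * Real.sqrt x)⁻¹ * Real.exp (-a/x - b*x)))
            = (B/2) * Real.exp (2*Real.sqrt (a*b)) *
              ((Real.sqrt x)⁻¹ * Real.exp (-a/x - b*x)
               + Real.sqrt (a/b) * ((x * Real.sqrt x)⁻¹ * Real.exp (-a/x - b*x))) := by ring
          _ = Real.exp (-(B * Real.sqrt x - A * (Real.sqrt x)⁻¹)^2)
              * (B / (2*Real.sqrt x) + A / (2*(x*Real.sqrt x))) := this.symm)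
  have hee : Real.exp (-(2*Real.sqrt (a*b))) * Real.exp (2*Real.sqrt (a*b)) = 1 := by
    rw [← Real.exp_add]; norm_num
  calc ∫ t in Ioi t₀, ((Real.sqrt t)⁻¹ * Real.exp (-a/t - b*t)
          + Real.sqrt (a/b) * ((t * Real.sqrt t)⁻¹ * Real.exp (-a/t - b*t)))
      = ∫ x in Ioi t₀, (2/B) * Real.exp (-(2*Real.sqrt (a*b))) * ((g ∘ φ) x * φ' x) := by
        refine setIntegral_congr_fun measurableSet_Ioi fun x hx => ?_
        have hx0 : (0:ℝ) < x := lt_of_le_of_lt ht₀0 hx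
        have hpt := pt_aux ha hb hx0
        simp only [hφ_def, hφ'_def, hg_def, Function.comp_apply]
        rw [hpt]
        set S := (Real.sqrt x)⁻¹ * Real.exp (-a/x - b*x)
          + Real.sqrt (a/b) * ((x * Real.sqrt x)⁻¹ * Real.exp (-a/x - b*x)) with hS_def
        have h9 : (2/B) * Real.exp (-(2*Real.sqrt (a*b))) * ((B/2) * Real.exp (2*Real.sqrt (a*b)) * S)
            = (Real.exp (-(2*Real.sqrt (a*b))) * Real.exp (2*Real.sqrt (a*b))) * S := by
          field_simp
        rw [h9, hee, one_mul]
    _ = (2/B) * Real.exp (-(2*Real.sqrt (a*b))) * ∫ x in Ioi t₀, (g ∘ φ) x * φ' x :=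
        integral_const_mul _ _
    _ = (2/B) * Real.exp (-(2*Real.sqrt (a*b))) * ∫ u in Ioi (0:ℝ), g u := by
        rw [hsub, hφt₀]
    _ = (2/B) * Real.exp (-(2*Real.sqrt (a*b))) * (Real.sqrt π/2) := by rw [hgauss]
    _ = Real.sqrt π / B * Real.exp (-(2 * Real.sqrt (a*b))) := by
        field_simp

private lemma key_aux {a b : ℝ} (ha : 0 ≤ a) (hb : 0 < b) :
    ∫ t in Ioi (0:ℝ), (Real.sqrt t)⁻¹ * Real.exp (-a/t - b*t)
      = Real.sqrt π / Real.sqrt b * Real.exp (-(2 * Real.sqrt (a*b))) := by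
  set t₀ := Real.sqrt (a/b) with ht₀_def
  have ht₀0 : 0 ≤ t₀ := Real.sqrt_nonneg _
  have hFt : IntegrableOn (fun t : ℝ => (Real.sqrt t)⁻¹ * Real.exp (-a/t - b*t))
      (Ioi t₀) := MeasureTheory.IntegrableOn.mono_set (hFaux ha hb) (Ioi_subset_Ioi ht₀0)
  have hGt : IntegrableOn (fun t : ℝ =>
      Real.sqrt (a/b) * ((t * Real.sqrt t)⁻¹ * Real.exp (-a/t - b*t)))
      (Ioi t₀) := MeasureTheory.IntegrableOn.mono_set (hGaux ha hb) (Ioi_subset_Ioi ht₀0)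
  have hsplit : ∫ t in Ioi (0:ℝ), (Real.sqrt t)⁻¹ * Real.exp (-a/t - b*t)
      = (∫ t in Ioc (0:ℝ) t₀, (Real.sqrt t)⁻¹ * Real.exp (-a/t - b*t))
        + ∫ t in Ioi t₀, (Real.sqrt t)⁻¹ * Real.exp (-a/t - b*t) := by
    rw [← Ioc_union_Ioi_eq_Ioi ht₀0]
    exact setIntegral_union (Ioc_disjoint_Ioi le_rfl) measurableSet_Ioi
      (MeasureTheory.IntegrableOn.mono_set (hFaux ha hb) Ioc_subset_Ioi_self) hFt
  have hswap : ∫ t in Ioc (0:ℝ) t₀, (Real.sqrt t)⁻¹ * Real.exp (-a/t - b*t)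
      = ∫ t in Ioi t₀, Real.sqrt (a/b) * ((t * Real.sqrt t)⁻¹ * Real.exp (-a/t - b*t)) := by
    rcases eq_or_lt_of_le ha with h0 | hapos
    · have h1 : t₀ = 0 := by rw [ht₀_def, ← h0, zero_div, Real.sqrt_zero]
      have h2 : Real.sqrt (a/b) = 0 := by rw [← h0, zero_div, Real.sqrt_zero]
      rw [h1, h2]
      simp
    · exact inv_aux hapos hb
  rw [hsplit, hswap, ← integral_add hGt hFt]
  rw [← subst_aux ha hb]
  refine setIntegral_congr_fun measurableSet_Ioi fun x hx => ?_
  ring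

/-- For `c > 0`, `D > 0`, `z ∈ ℝ`, the improper integral converges and
`(c/√(2πD²)) ∫₀^∞ t^{-1/2} exp(-(z - ct)²/(2D²t)) dt = exp((z - |z|)c/D²)`; in particular
the value is `1` for `z ≥ 0` and `exp(2cz/D²)` for `z < 0`. -/
theorem stmt17 (c D z : ℝ) (hc : 0 < c) (hD : 0 < D) :
    IntegrableOn
      (fun t : ℝ => t ^ (-(1:ℝ)/2) * Real.exp (-(z - c * t) ^ 2 / (2 * D ^ 2 * t)))
      (Set.Ioi 0) ∧
    c / Real.sqrt (2 * Real.pi * D ^ 2) *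
        ∫ t in Set.Ioi (0:ℝ),
          t ^ (-(1:ℝ)/2) * Real.exp (-(z - c * t) ^ 2 / (2 * D ^ 2 * t)) =
      Real.exp ((z - |z|) * c / D ^ 2) ∧
    (0 ≤ z → Real.exp ((z - |z|) * c / D ^ 2) = 1) ∧
    (z < 0 → Real.exp ((z - |z|) * c / D ^ 2) = Real.exp (2 * c * z / D ^ 2)) := by
  have hD2 : (0:ℝ) < D^2 := by positivity
  set a := z^2/(2*D^2) with ha_def
  set b := c^2/(2*D^2) with hb_def
  have ha : 0 ≤ a := by positivity
  have hb : 0 < b := by positivity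
  have heq : ∀ t ∈ Ioi (0:ℝ),
      t ^ (-(1:ℝ)/2) * Real.exp (-(z - c * t) ^ 2 / (2 * D ^ 2 * t))
        = Real.exp (c*z/D^2) * ((Real.sqrt t)⁻¹ * Real.exp (-a/t - b*t)) := by
    intro t ht
    have ht0 : (0:ℝ) < t := ht
    have h1 : (Real.sqrt t)⁻¹ = t ^ (-(1:ℝ)/2) := by
      rw [show (-(1:ℝ)/2) = -(1/2) by ring, Real.rpow_neg ht0.le, ← Real.sqrt_eq_rpow]
    have h2 : -(z - c*t)^2 / (2*D^2*t) = c*z/D^2 + (-a/t - b*t) := by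
      rw [ha_def, hb_def]
      field_simp
      ring
    rw [← h1, h2, Real.exp_add]
    ring
  refine ⟨?_, ?_, ?_, ?_⟩
  · refine MeasureTheory.IntegrableOn.congr_fun
      ((hFaux ha hb).const_mul (Real.exp (c*z/D^2))) (fun t ht => (heq t ht).symm)
      measurableSet_Ioi
  · have hval : ∫ t in Ioi (0:ℝ),
        t ^ (-(1:ℝ)/2) * Real.exp (-(z - c * t) ^ 2 / (2 * D ^ 2 * t))
        = Real.exp (c*z/D^2) *
          (Real.sqrt π / Real.sqrt b * Real.exp (-(2 * Real.sqrt (a*b)))) := by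
      rw [setIntegral_congr_fun measurableSet_Ioi heq, integral_const_mul, key_aux ha hb]
    rw [hval]
    have hab : Real.sqrt (a*b) = |z| * c / (2*D^2) := by
      rw [ha_def, hb_def, show z^2/(2*D^2) * (c^2/(2*D^2)) = (z*c/(2*D^2))^2 by ring,
        Real.sqrt_sq_eq_abs, abs_div, abs_mul, abs_of_pos hc,
        abs_of_pos (show (0:ℝ) < 2*D^2 by positivity)]
    have hsb : Real.sqrt b = c / Real.sqrt (2*D^2) := by
      rw [hb_def, Real.sqrt_div (sq_nonneg c), Real.sqrt_sq hc.le]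
    have h2D : (0:ℝ) < Real.sqrt (2*D^2) := Real.sqrt_pos.2 (by positivity)
    have hπ : (0:ℝ) < Real.sqrt π := Real.sqrt_pos.2 Real.pi_pos
    have hfac : Real.sqrt (2 * Real.pi * D^2) = Real.sqrt π * Real.sqrt (2*D^2) := by
      rw [show 2 * Real.pi * D^2 = π * (2*D^2) by ring, Real.sqrt_mul Real.pi_pos.le]
    rw [hab, hsb, hfac]
    have hone : c / (Real.sqrt π * Real.sqrt (2*D^2)) *
        (Real.sqrt π / (c / Real.sqrt (2*D^2))) = 1 := by
      field_simp
    have harg : c*z/D^2 + -(2 * (|z| * c / (2*D^2))) = (z - |z|) * c / D^2 := by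
      field_simp
      ring
    calc c / (Real.sqrt π * Real.sqrt (2*D^2)) *
          (Real.exp (c*z/D^2) *
            (Real.sqrt π / (c / Real.sqrt (2*D^2)) * Real.exp (-(2 * (|z| * c / (2*D^2))))))
        = (c / (Real.sqrt π * Real.sqrt (2*D^2)) *
            (Real.sqrt π / (c / Real.sqrt (2*D^2)))) *
            (Real.exp (c*z/D^2) * Real.exp (-(2 * (|z| * c / (2*D^2))))) := by ring
      _ = 1 * Real.exp (c*z/D^2 + -(2 * (|z| * c / (2*D^2)))) := by
          rw [hone, ← Real.exp_add]
      _ = Real.exp ((z - |z|) * c / D^2) := by rw [one_mul, harg]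
  · intro hz
    rw [abs_of_nonneg hz]
    simp
  · intro hz
    rw [abs_of_neg hz]
    congr 1
    ring
end

section
/- For all real c > 0, D > 0 and δ > 0, ∫_{-∞}^{∞} (2πD²δ)^{-1/2} exp(-(z - cδ)²/(2D²δ)) · exp((-z - |z|)c/D²) dz = (2/√π) ∫_{c√δ/(√2 D)}^{∞} e^{-u²} du. (The right-hand side equals 1 - erf(c√δ/(√2 D)); the left-hand side is the probability that the drifted Brownian motion dy = c dt + D dW started at 0 returns to 0 at some time t ≥ δ.) -/
open MeasureTheory Set

private lemma shift_Ioi (F : ℝ → ℝ) (a d : ℝ) :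
    (∫ x in Set.Ioi a, F (x + d)) = ∫ x in Set.Ioi (a + d), F x := by
  have A : MeasurableEmbedding fun x : ℝ => x + d :=
    (Homeomorph.addRight d).measurableEmbedding
  have h := A.setIntegral_map (μ := volume) F (Set.Ioi (a + d))
  rw [map_add_right_eq_self volume d] at h
  simp only [preimage_add_const_Ioi, add_sub_cancel_right] at h
  exact h.symm

/-- For `c > 0`, `D > 0`, `δ > 0`,
`∫_{-∞}^{∞} (2πD²δ)^{-1/2} exp(-(z - cδ)²/(2D²δ)) · exp((-z - |z|)c/D²) dz
  = (2/√π) ∫_{c√δ/(√2 D)}^{∞} e^{-u²} du`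
(the probability that the drifted Brownian motion `dy = c dt + D dW` started at `0`
returns to `0` at some time `t ≥ δ`). -/
theorem stmt18 (c D δ : ℝ) (hc : 0 < c) (hD : 0 < D) (hδ : 0 < δ) :
    Integrable (fun z : ℝ =>
      (Real.sqrt (2 * Real.pi * D ^ 2 * δ))⁻¹ *
        Real.exp (-(z - c * δ) ^ 2 / (2 * D ^ 2 * δ)) *
        Real.exp ((-z - |z|) * c / D ^ 2)) ∧
    (∫ z : ℝ,
        (Real.sqrt (2 * Real.pi * D ^ 2 * δ))⁻¹ *
          Real.exp (-(z - c * δ) ^ 2 / (2 * D ^ 2 * δ)) *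
          Real.exp ((-z - |z|) * c / D ^ 2)) =
      2 / Real.sqrt Real.pi *
        ∫ u in Set.Ioi (c * Real.sqrt δ / (Real.sqrt 2 * D)), Real.exp (-u ^ 2) := by
  have hD2δ : (0:ℝ) < 2 * D ^ 2 * δ := by positivity
  set m := c * δ with hm
  set K := (Real.sqrt (2 * Real.pi * D ^ 2 * δ))⁻¹ with hK
  have hKpos : 0 < K := by positivity
  set b := (2 * D ^ 2 * δ)⁻¹ with hb
  have hbpos : 0 < b := by positivity
  set f : ℝ → ℝ := fun z =>
      K * Real.exp (-(z - m) ^ 2 / (2 * D ^ 2 * δ)) *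
        Real.exp ((-z - |z|) * c / D ^ 2) with hf
  set A := c * Real.sqrt δ / (Real.sqrt 2 * D) with hA
  set β := Real.sqrt 2 * D * Real.sqrt δ with hβ
  have hβpos : 0 < β := by positivity
  have e1 : ∀ z : ℝ, -(z - m) ^ 2 / (2 * D ^ 2 * δ) = -b * (z - m) ^ 2 := by
    intro z; rw [hb]; field_simp
  have e2 : ∀ z : ℝ, -b * (z - m) ^ 2 + (-z - z) * c / D ^ 2 = -b * (z + m) ^ 2 := by
    intro z; rw [hb, hm]; field_simp; ring
  have hfz_le : ∀ z : ℝ, z ≤ 0 → f z = K * Real.exp (-b * (z - m) ^ 2) := by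
    intro z hz
    simp only [hf]
    rw [abs_of_nonpos hz, e1 z]
    have h0 : -z - -z = 0 := by ring
    rw [h0, zero_mul, zero_div, Real.exp_zero, mul_one]
  have hfz_ge : ∀ z : ℝ, 0 ≤ z → f z = K * Real.exp (-b * (z + m) ^ 2) := by
    intro z hz
    simp only [hf]
    rw [abs_of_nonneg hz, e1 z, mul_assoc, ← Real.exp_add, e2 z]
  -- integrability
  have hI1 : Integrable (fun z : ℝ => K * Real.exp (-b * (z - m) ^ 2)) := by
    have h := (integrable_exp_neg_mul_sq hbpos).comp_add_right (-m)
    simp_rw [← sub_eq_add_neg] at h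
    exact h.const_mul K
  have hI2 : Integrable (fun z : ℝ => K * Real.exp (-b * (z + m) ^ 2)) :=
    ((integrable_exp_neg_mul_sq hbpos).comp_add_right m).const_mul K
  have hcont : Continuous f := by
    apply Continuous.mul
    · exact continuous_const.mul (Real.continuous_exp.comp (by fun_prop))
    · exact Real.continuous_exp.comp (by fun_prop)
  have hint : Integrable f := by
    refine (hI1.add hI2).mono hcont.aestronglyMeasurable (ae_of_all _ fun z => ?_)
    have hg1 : (0:ℝ) < K * Real.exp (-b * (z - m) ^ 2) := by positivity
    have hg2 : (0:ℝ) < K * Real.exp (-b * (z + m) ^ 2) := by positivity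
    simp only [Pi.add_apply, Real.norm_eq_abs]
    rcases le_or_gt z 0 with hz | hz
    · rw [hfz_le z hz, abs_of_pos hg1, abs_of_pos (by linarith)]
      linarith
    · rw [hfz_ge z hz.le, abs_of_pos hg2, abs_of_pos (by linarith)]
      linarith
  refine ⟨hint, ?_⟩
  -- split the integral
  have hsplit : (∫ z, f z) = (∫ z in Iic (0:ℝ), f z) + ∫ z in Ioi (0:ℝ), f z :=
    (intervalIntegral.integral_Iic_add_Ioi hint.integrableOn hint.integrableOn).symm
  have hIoi : (∫ z in Ioi (0:ℝ), f z)
      = ∫ z in Ioi (0:ℝ), K * Real.exp (-b * (z + m) ^ 2) :=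
    setIntegral_congr_fun measurableSet_Ioi fun z hz => hfz_ge z (le_of_lt hz)
  have hIic : (∫ z in Iic (0:ℝ), f z)
      = ∫ z in Ioi (0:ℝ), K * Real.exp (-b * (z + m) ^ 2) := by
    rw [setIntegral_congr_fun measurableSet_Iic fun z hz => hfz_le z hz]
    have hneg := integral_comp_neg_Ioi (0:ℝ)
      (fun z : ℝ => K * Real.exp (-b * (z - m) ^ 2))
    rw [neg_zero] at hneg
    rw [← hneg]
    refine setIntegral_congr_fun measurableSet_Ioi fun x _ => ?_
    have : -b * (-x - m) ^ 2 = -b * (x + m) ^ 2 := by ring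
    simp only [this]
  -- shift and rescale
  have hshift : (∫ z in Ioi (0:ℝ), K * Real.exp (-b * (z + m) ^ 2))
      = ∫ s in Ioi m, K * Real.exp (-b * s ^ 2) := by
    have h := shift_Ioi (fun s : ℝ => K * Real.exp (-b * s ^ 2)) 0 m
    rw [zero_add] at h
    exact h
  have hβ2 : β ^ 2 = 2 * D ^ 2 * δ := by
    rw [hβ, mul_pow, mul_pow, Real.sq_sqrt (by norm_num : (0:ℝ) ≤ 2),
      Real.sq_sqrt hδ.le]
  have hbβ : b * β ^ 2 = 1 := by
    rw [hb, hβ2]; exact inv_mul_cancel₀ hD2δ.ne'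
  have hβA : β * A = m := by
    have hd : Real.sqrt δ * Real.sqrt δ = δ := Real.mul_self_sqrt hδ.le
    have h2 : Real.sqrt 2 ≠ 0 := by positivity
    rw [hβ, hA, hm, div_eq_mul_inv]
    rw [show Real.sqrt 2 * D * Real.sqrt δ * (c * Real.sqrt δ * (Real.sqrt 2 * D)⁻¹)
        = Real.sqrt δ * Real.sqrt δ * c * (Real.sqrt 2 * D * (Real.sqrt 2 * D)⁻¹) by ring,
      hd, mul_inv_cancel₀ (by positivity), mul_one]
    ring
  have hscale := integral_comp_mul_left_Ioi
    (fun s : ℝ => K * Real.exp (-b * s ^ 2)) A hβpos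
  rw [hβA] at hscale
  have harg : (∫ x in Ioi A, K * Real.exp (-b * (β * x) ^ 2))
      = ∫ x in Ioi A, K * Real.exp (-x ^ 2) := by
    refine setIntegral_congr_fun measurableSet_Ioi fun x _ => ?_
    have : -b * (β * x) ^ 2 = -(b * β ^ 2) * x ^ 2 := by ring
    rw [this, hbβ]; norm_num
  have hmain : (∫ s in Ioi m, K * Real.exp (-b * s ^ 2))
      = β * ∫ x in Ioi A, K * Real.exp (-x ^ 2) := by
    rw [← harg, hscale, smul_eq_mul, ← mul_assoc, mul_inv_cancel₀ hβpos.ne', one_mul]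
  have hβK : β * K = (Real.sqrt Real.pi)⁻¹ := by
    have hπ : (0:ℝ) < Real.sqrt Real.pi := Real.sqrt_pos.mpr Real.pi_pos
    rw [hβ, hK, Real.sqrt_mul (by positivity : (0:ℝ) ≤ 2 * Real.pi * D ^ 2) δ,
      Real.sqrt_mul (by positivity : (0:ℝ) ≤ 2 * Real.pi) (D ^ 2),
      Real.sqrt_mul (by norm_num : (0:ℝ) ≤ 2) Real.pi,
      Real.sqrt_sq hD.le]
    have h2 : Real.sqrt 2 ≠ 0 := by positivity
    have hδ' : Real.sqrt δ ≠ 0 := by positivity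
    field_simp
  rw [hsplit, hIic, hIoi, hshift, hmain, integral_const_mul K, div_eq_mul_inv, ← hβK]
  ring
end
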